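/- arXiv:2210.10404 — 6 statements merged into one kernel-verified Lean document; each statement's English description precedes it below -/
import Mathlib

section
/- Let n be odd, and consider the RFM in which all internal rates are constant, uᵢ(t) ≡ ūᵢ for i = 1,…,n-1, while u₀ and u_n are arbitrary continuous positive T-periodic functions. Then there is no gain of entrainment: R_P ≤ R_C. -/
open MeasureTheory intervalIntegral Real Filter

set_option maxHeartbeats 2000000 in
theorem rfm_no_goe_odd_constant_internal
    (n : ℕ) (hn : 1 ≤ n) (T : ℝ) (hT : 0 < T)
    (u : ℕ → ℝ → ℝ) (x : ℕ → ℝ → ℝ) (e : ℕ → ℝ)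
    (hu_cont : ∀ i, i ≤ n → Continuous (u i))
    (hu_pos : ∀ i, i ≤ n → ∀ t, 0 < u i t)
    (hu_per : ∀ i, i ≤ n → ∀ t, u i (t + T) = u i t)
    (hx0 : ∀ t, x 0 t = 1) (hxtop : ∀ t, x (n+1) t = 0)
    (hxdiff : ∀ i, 1 ≤ i → i ≤ n → Differentiable ℝ (x i))
    (hxper : ∀ i, 1 ≤ i → i ≤ n → ∀ t, x i (t + T) = x i t)
    (hxmem : ∀ i, 1 ≤ i → i ≤ n → ∀ t, x i t ∈ Set.Ioo (0:ℝ) 1)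
    (hode : ∀ i, 1 ≤ i → i ≤ n → ∀ t,
      deriv (x i) t
        = u (i-1) t * x (i-1) t * (1 - x i t) - u i t * x i t * (1 - x (i+1) t))
    (he0 : e 0 = 1) (hetop : e (n+1) = 0)
    (hemem : ∀ i, 1 ≤ i → i ≤ n → e i ∈ Set.Ioo (0:ℝ) 1)
    (heq : ∀ i, 1 ≤ i → i ≤ n →
      (1/T * ∫ t in (0:ℝ)..T, u (i-1) t) * e (i-1) * (1 - e i)
        = (1/T * ∫ t in (0:ℝ)..T, u i t) * e i * (1 - e (i+1)))
    (hodd : Odd n)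
    (hconst : ∀ i, 1 ≤ i → i ≤ n - 1 →
      ∀ t, u i t = 1/T * ∫ s in (0:ℝ)..T, u i s) :
    1/T * ∫ t in (0:ℝ)..T, u n t * x n t ≤ (1/T * ∫ t in (0:ℝ)..T, u n t) * e n := by
  by_contra hcon
  push_neg at hcon
  have hT0 : (0:ℝ) ≤ T := le_of_lt hT
  have hTne : T ≠ 0 := ne_of_gt hT
  -- basic facts about x
  have hxc : ∀ k, k ≤ n + 1 → Continuous (x k) := by
    intro k hk
    rcases Nat.eq_zero_or_pos k with h0 | h1
    · subst h0
      have hfe : x 0 = fun _ => (1:ℝ) := funext hx0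
      rw [hfe]; exact continuous_const
    · by_cases hkn : k ≤ n
      · exact (hxdiff k h1 hkn).continuous
      · have hk1 : k = n + 1 := by omega
        subst hk1
        have hfe : x (n+1) = fun _ => (0:ℝ) := funext hxtop
        rw [hfe]; exact continuous_const
  have hxpos : ∀ k, k ≤ n → ∀ t, 0 < x k t := by
    intro k hk t
    rcases Nat.eq_zero_or_pos k with h0 | h1
    · subst h0; rw [hx0]; norm_num
    · exact (hxmem k h1 hk t).1
  have hxlt1 : ∀ k, 1 ≤ k → k ≤ n + 1 → ∀ t, x k t < 1 := by
    intro k h1 hk t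
    by_cases hkn : k ≤ n
    · exact (hxmem k h1 hkn t).2
    · have hk1 : k = n + 1 := by omega
      subst hk1; rw [hxtop]; norm_num
  have hxTper : ∀ k, k ≤ n + 1 → x k T = x k 0 := by
    intro k hk
    rcases Nat.eq_zero_or_pos k with h0 | h1
    · subst h0; rw [hx0, hx0]
    · by_cases hkn : k ≤ n
      · have h := hxper k h1 hkn 0; rwa [zero_add] at h
      · have hk1 : k = n + 1 := by omega
        subst hk1; rw [hxtop, hxtop]
  -- positivity of integrals
  have POS : ∀ f : ℝ → ℝ, Continuous f → (∀ t, 0 < f t) → 0 < ∫ t in (0:ℝ)..T, f t :=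
    fun f hf hp =>
      intervalIntegral.intervalIntegral_pos_of_pos (hf.intervalIntegrable 0 T) hp hT
  -- Cauchy-Schwarz
  have CS : ∀ h φ : ℝ → ℝ, Continuous h → Continuous φ → (∀ t, 0 < h t) → (∀ t, 0 < φ t) →
      (∫ t in (0:ℝ)..T, h t)^2 ≤ (∫ t in (0:ℝ)..T, h t * φ t) * (∫ t in (0:ℝ)..T, h t / φ t) := by
    intro h φ hh hφ hhp hφp
    have hφne : ∀ t, φ t ≠ 0 := fun t => ne_of_gt (hφp t)
    set A := ∫ t in (0:ℝ)..T, h t * φ t with hA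
    set B := ∫ t in (0:ℝ)..T, h t with hB
    set C := ∫ t in (0:ℝ)..T, h t / φ t with hC
    have hdiv : Continuous fun t => h t / φ t := hh.div hφ hφne
    have hmul : Continuous fun t => h t * φ t := hh.mul hφ
    have hCpos : 0 < C := POS _ hdiv (fun t => div_pos (hhp t) (hφp t))
    have key : 0 ≤ ∫ t in (0:ℝ)..T,
        (C^2 * (h t * φ t) - 2*C*B* h t + B^2 * (h t / φ t)) := by
      apply intervalIntegral.integral_nonneg hT0
      intro t _
      have hid : C^2 * (h t * φ t) - 2*C*B* h t + B^2 * (h t / φ t)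
          = (h t / φ t) * (C * φ t - B)^2 := by
        field_simp [hφne t]
        ring
      rw [hid]
      have := le_of_lt (hhp t)
      have := le_of_lt (hφp t)
      positivity
    have expand : (∫ t in (0:ℝ)..T,
        (C^2 * (h t * φ t) - 2*C*B* h t + B^2 * (h t / φ t)))
        = C^2 * A - 2*C*B*B + B^2 * C := by
      rw [intervalIntegral.integral_add, intervalIntegral.integral_sub]
      · rw [intervalIntegral.integral_const_mul, intervalIntegral.integral_const_mul,
          intervalIntegral.integral_const_mul, ← hA, ← hB, ← hC]
      · exact (continuous_const.mul hmul).intervalIntegrable 0 T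
      · exact (continuous_const.mul hh).intervalIntegrable 0 T
      · exact ((continuous_const.mul hmul).sub (continuous_const.mul hh)).intervalIntegrable 0 T
      · exact (continuous_const.mul hdiv).intervalIntegrable 0 T
    rw [expand] at key
    nlinarith [key, hCpos]
  -- zero integrals of derivatives
  have cflux : ∀ k, k ≤ n → Continuous (fun t => u k t * x k t * (1 - x (k+1) t)) :=
    fun k hk => ((hu_cont k hk).mul (hxc k (by omega))).mul
      (continuous_const.sub (hxc (k+1) (by omega)))
  have code : ∀ k, 1 ≤ k → k ≤ n → Continuous
      (fun t => u (k-1) t * x (k-1) t * (1 - x k t) - u k t * x k t * (1 - x (k+1) t)) :=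
    fun k h1 hk =>
      (((hu_cont (k-1) (by omega)).mul (hxc (k-1) (by omega))).mul
        (continuous_const.sub (hxc k (by omega)))).sub
      (((hu_cont k hk).mul (hxc k (by omega))).mul
        (continuous_const.sub (hxc (k+1) (by omega))))
  have Z1 : ∀ k, 1 ≤ k → k ≤ n →
      (∫ t in (0:ℝ)..T,
        (u (k-1) t * x (k-1) t * (1 - x k t) - u k t * x k t * (1 - x (k+1) t))) = 0 := by
    intro k h1 hk
    have hd : ∀ t ∈ Set.uIcc (0:ℝ) T, HasDerivAt (x k)
        ((fun s => u (k-1) s * x (k-1) s * (1 - x k s) - u k s * x k s * (1 - x (k+1) s)) t) t := by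
      intro t _
      have h := ((hxdiff k h1 hk) t).hasDerivAt
      rwa [hode k h1 hk t] at h
    have h := intervalIntegral.integral_eq_sub_of_hasDerivAt hd
      ((code k h1 hk).intervalIntegrable 0 T)
    rw [hxTper k (by omega), sub_self] at h
    exact h
  have Z2 : ∀ k, 1 ≤ k → k ≤ n →
      (∫ t in (0:ℝ)..T,
        (u (k-1) t * x (k-1) t * (1 - x k t) - u k t * x k t * (1 - x (k+1) t)) / x k t) = 0 := by
    intro k h1 hk
    have hd : ∀ t ∈ Set.uIcc (0:ℝ) T, HasDerivAt (fun s => Real.log (x k s))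
        ((fun s => (u (k-1) s * x (k-1) s * (1 - x k s) - u k s * x k s * (1 - x (k+1) s)) / x k s) t) t := by
      intro t _
      have h := (((hxdiff k h1 hk) t).hasDerivAt).log (ne_of_gt (hxpos k hk t))
      rwa [hode k h1 hk t] at h
    have h := intervalIntegral.integral_eq_sub_of_hasDerivAt hd
      (((code k h1 hk).div (hxc k (by omega))
        (fun t => ne_of_gt (hxpos k hk t))).intervalIntegrable 0 T)
    rw [hxTper k (by omega), sub_self] at h
    exact h
  have Z3 : ∀ k, 1 ≤ k → k ≤ n →
      (∫ t in (0:ℝ)..T,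
        (u (k-1) t * x (k-1) t * (1 - x k t) - u k t * x k t * (1 - x (k+1) t)) / (1 - x k t)) = 0 := by
    intro k h1 hk
    have hd : ∀ t ∈ Set.uIcc (0:ℝ) T, HasDerivAt (fun s => -Real.log (1 - x k s))
        ((fun s => (u (k-1) s * x (k-1) s * (1 - x k s) - u k s * x k s * (1 - x (k+1) s)) / (1 - x k s)) t) t := by
      intro t _
      have hne : 1 - x k t ≠ 0 := by
        have hlt := hxlt1 k h1 (by omega) t; exact ne_of_gt (by linarith)
      have h1d : HasDerivAt (fun s => 1 - x k s) (-(deriv (x k) t)) t :=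
        (((hxdiff k h1 hk) t).hasDerivAt).const_sub 1
      have h2 := (h1d.log hne).neg
      have h3 : -(-deriv (x k) t / (1 - x k t)) = deriv (x k) t / (1 - x k t) := by
        field_simp
      rw [h3] at h2
      rwa [hode k h1 hk t] at h2
    have h := intervalIntegral.integral_eq_sub_of_hasDerivAt hd
      (((code k h1 hk).div (continuous_const.sub (hxc k (by omega)))
        (fun t => by have := hxlt1 k h1 (by omega) t; intro hc; have hc' : (1:ℝ) - x k t = 0 := hc; linarith)).intervalIntegrable 0 T)
    rw [hxTper k (by omega), sub_self] at h
    exact h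
  -- flux adjacency and telescoping
  have Φeq : ∀ j, j + 1 ≤ n →
      (∫ t in (0:ℝ)..T, u j t * x j t * (1 - x (j+1) t))
        = ∫ t in (0:ℝ)..T, u (j+1) t * x (j+1) t * (1 - x (j+1+1) t) := by
    intro j hj
    have z := Z1 (j+1) (by omega) hj
    simp only [Nat.add_sub_cancel] at z
    rw [intervalIntegral.integral_sub
      ((cflux j (by omega)).intervalIntegrable 0 T)
      ((cflux (j+1) (by omega)).intervalIntegrable 0 T)] at z
    linarith
  have Φtel : ∀ d k, k + d = n →
      (∫ t in (0:ℝ)..T, u k t * x k t * (1 - x (k+1) t))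
        = ∫ t in (0:ℝ)..T, u n t * x n t * (1 - x (n+1) t) := by
    intro d
    induction d with
    | zero =>
      intro k hk
      have hkn : k = n := by omega
      subst hkn; rfl
    | succ d ih =>
      intro k hk
      rw [Φeq k (by omega)]
      exact ih (k+1) (by omega)
  have Etel : ∀ d k, k + d = n →
      (1/T * ∫ t in (0:ℝ)..T, u k t) * e k * (1 - e (k+1))
        = (1/T * ∫ t in (0:ℝ)..T, u n t) * e n := by
    intro d
    induction d with
    | zero =>
      intro k hk
      have hkn : k = n := by omega
      subst hkn; rw [hetop]; ring
    | succ d ih =>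
      intro k hk
      have h1 := heq (k+1) (by omega) (by omega)
      simp only [Nat.add_sub_cancel] at h1
      rw [h1]
      exact ih (k+1) (by omega)
  -- log-derivative identities
  have LogXid : ∀ k, 1 ≤ k → k ≤ n →
      (∫ t in (0:ℝ)..T, u (k-1) t * x (k-1) t * (1 - x k t) / x k t)
        = ∫ t in (0:ℝ)..T, u k t * (1 - x (k+1) t) := by
    intro k h1 hk
    have z := Z2 k h1 hk
    have hre : (fun t => (u (k-1) t * x (k-1) t * (1 - x k t) - u k t * x k t * (1 - x (k+1) t)) / x k t)
        = fun t => u (k-1) t * x (k-1) t * (1 - x k t) / x k t - u k t * (1 - x (k+1) t) := by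
      funext t
      have hne : x k t ≠ 0 := ne_of_gt (hxpos k hk t)
      field_simp
    rw [hre] at z
    have c1 : Continuous fun t => u (k-1) t * x (k-1) t * (1 - x k t) / x k t := by
      exact (((hu_cont (k-1) (by omega)).mul (hxc (k-1) (by omega))).mul
        (continuous_const.sub (hxc k (by omega)))).div (hxc k (by omega))
        (fun t => ne_of_gt (hxpos k hk t))
    have c2 : Continuous fun t => u k t * (1 - x (k+1) t) := by
      exact (hu_cont k hk).mul (continuous_const.sub (hxc (k+1) (by omega)))
    rw [intervalIntegral.integral_sub (c1.intervalIntegrable 0 T)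
      (c2.intervalIntegrable 0 T)] at z
    linarith
  have Log1mXid : ∀ k, 1 ≤ k → k ≤ n →
      (∫ t in (0:ℝ)..T, u (k-1) t * x (k-1) t)
        = ∫ t in (0:ℝ)..T, u k t * x k t * (1 - x (k+1) t) / (1 - x k t) := by
    intro k h1 hk
    have z := Z3 k h1 hk
    have hre : (fun t => (u (k-1) t * x (k-1) t * (1 - x k t) - u k t * x k t * (1 - x (k+1) t)) / (1 - x k t))
        = fun t => u (k-1) t * x (k-1) t - u k t * x k t * (1 - x (k+1) t) / (1 - x k t) := by
      funext t
      have hne : (1:ℝ) - x k t ≠ 0 := ne_of_gt (by have := hxlt1 k h1 (by omega) t; linarith)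
      field_simp
    rw [hre] at z
    have c1 : Continuous fun t => u (k-1) t * x (k-1) t := by
      exact (hu_cont (k-1) (by omega)).mul (hxc (k-1) (by omega))
    have c2 : Continuous fun t => u k t * x k t * (1 - x (k+1) t) / (1 - x k t) := by
      refine (cflux k hk).div (continuous_const.sub (hxc k (by omega))) (fun t => ?_)
      have hlt := hxlt1 k h1 (by omega) t
      exact ne_of_gt (by linarith)
    rw [intervalIntegral.integral_sub (c1.intervalIntegrable 0 T)
      (c2.intervalIntegrable 0 T)] at z
    linarith
  -- scaled contradiction hypothesis
  have hS : 0 < ∫ t in (0:ℝ)..T, u n t := POS _ (hu_cont n le_rfl) (hu_pos n le_rfl)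
  have hTcancel : ∀ a b : ℝ, 1 / T * a = 1 / T * b → a = b := by
    intro a b h
    exact mul_left_cancel₀ (one_div_ne_zero hTne) h
  have hJ : (∫ t in (0:ℝ)..T, u n t) * e n < ∫ t in (0:ℝ)..T, u n t * x n t := by
    have h2 := mul_lt_mul_of_pos_left hcon hT
    rw [show T * ((1/T * ∫ t in (0:ℝ)..T, u n t) * e n)
        = (∫ t in (0:ℝ)..T, u n t) * e n from by field_simp,
      show T * (1/T * ∫ t in (0:ℝ)..T, u n t * x n t)
        = ∫ t in (0:ℝ)..T, u n t * x n t from by field_simp] at h2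
    exact h2
  have henpos : 0 < e n := (hemem n hn le_rfl).1
  have henlt : e n < 1 := (hemem n hn le_rfl).2
  -- ===== TOP STEP =====
  have hTop : 2 ≤ n → T * e (n-1) < ∫ t in (0:ℝ)..T, x (n-1) t := by
    intro hn2
    have cxn : Continuous (x n) := hxc n (by omega)
    have hxnlt : ∀ t, x n t < 1 := fun t => hxlt1 n (by omega) (by omega) t
    have hxnpos : ∀ t, 0 < x n t := hxpos n le_rfl
    -- ∫ u n (1 - x n) = S - J
    have hs1 : (∫ t in (0:ℝ)..T, u n t * (1 - x n t))
        = (∫ t in (0:ℝ)..T, u n t) - ∫ t in (0:ℝ)..T, u n t * x n t := by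
      have hre : (fun t => u n t * (1 - x n t)) = fun t => u n t - u n t * x n t := by
        funext t; ring
      rw [hre, intervalIntegral.integral_sub ((hu_cont n le_rfl).intervalIntegrable 0 T)
        ((show Continuous fun t => u n t * x n t from (hu_cont n le_rfl).mul cxn).intervalIntegrable 0 T)]
    have hlt : (∫ t in (0:ℝ)..T, u n t * (1 - x n t))
        < (∫ t in (0:ℝ)..T, u n t) * (1 - e n) := by
      have hr : (∫ t in (0:ℝ)..T, u n t) * (1 - e n)
          = (∫ t in (0:ℝ)..T, u n t) - (∫ t in (0:ℝ)..T, u n t) * e n := by ring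
      rw [hs1, hr]
      linarith [hJ]
    have hpos1 : 0 < ∫ t in (0:ℝ)..T, u n t * (1 - x n t) :=
      POS _ ((hu_cont n le_rfl).mul (continuous_const.sub cxn))
        (fun t => mul_pos (hu_pos n le_rfl t) (by have := hxnlt t; linarith))
    have cdivn : Continuous fun t => u n t / (1 - x n t) :=
      (hu_cont n le_rfl).div (continuous_const.sub cxn)
        (fun t => ne_of_gt (by have := hxnlt t; linarith))
    have hposK : 0 < ∫ t in (0:ℝ)..T, u n t / (1 - x n t) :=
      POS _ cdivn (fun t => div_pos (hu_pos n le_rfl t) (by have := hxnlt t; linarith))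
    have cs := CS (u n) (fun t => 1 - x n t) (hu_cont n le_rfl)
      (continuous_const.sub cxn) (hu_pos n le_rfl)
      (fun t => show (0:ℝ) < 1 - x n t by have := hxnlt t; linarith)
    -- K * (1 - e n) > S
    have hK : (∫ t in (0:ℝ)..T, u n t / (1 - x n t)) * (1 - e n)
        > ∫ t in (0:ℝ)..T, u n t := by
      have hm := mul_lt_mul_of_pos_right hlt hposK
      nlinarith only [cs, hm, hS, hposK, hpos1]
    -- Log1mX identity at n
    have hL := Log1mXid n (by omega) le_rfl
    simp only [hxtop, sub_zero, mul_one] at hL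
    have hsplit2 : (∫ t in (0:ℝ)..T, u n t * x n t / (1 - x n t))
        = (∫ t in (0:ℝ)..T, u n t / (1 - x n t)) - ∫ t in (0:ℝ)..T, u n t := by
      have hre : (fun t => u n t * x n t / (1 - x n t))
          = fun t => u n t / (1 - x n t) - u n t := by
        funext t
        have hne : (1:ℝ) - x n t ≠ 0 := ne_of_gt (by have := hxnlt t; linarith)
        field_simp
        ring
      rw [hre]
      have c1 : Continuous fun t => u n t / (1 - x n t) :=
        (hu_cont n le_rfl).div (continuous_const.sub cxn)
          (fun t => ne_of_gt (by have := hxnlt t; linarith))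
      rw [intervalIntegral.integral_sub (c1.intervalIntegrable 0 T)
        ((hu_cont n le_rfl).intervalIntegrable 0 T)]
    rw [hsplit2] at hL
    -- W := ∫ u (n-1) x (n-1) satisfies W * (1 - e n) > S * e n
    have hW : (∫ t in (0:ℝ)..T, u (n-1) t * x (n-1) t) * (1 - e n)
        > (∫ t in (0:ℝ)..T, u n t) * e n := by
      rw [hL]
      linarith only [hK]
    -- constant rate u (n-1)
    have hcnm := hconst (n-1) (by omega) (by omega)
    have hposnm : 0 < ∫ s in (0:ℝ)..T, u (n-1) s :=
      POS _ (hu_cont (n-1) (by omega)) (hu_pos (n-1) (by omega))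
    have hWc : (∫ t in (0:ℝ)..T, u (n-1) t * x (n-1) t)
        = (1/T * ∫ s in (0:ℝ)..T, u (n-1) s) * ∫ t in (0:ℝ)..T, x (n-1) t := by
      have hre : (fun t => u (n-1) t * x (n-1) t)
          = fun t => (1/T * ∫ s in (0:ℝ)..T, u (n-1) s) * x (n-1) t := by
        funext t; rw [hcnm t]
      rw [hre, intervalIntegral.integral_const_mul]
    -- equilibrium relation at n
    have hE := Etel 1 (n-1) (by omega)
    rw [show n - 1 + 1 = n from by omega] at hE
    have hkey : (∫ t in (0:ℝ)..T, u n t) * e n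
        = T * ((1/T * ∫ s in (0:ℝ)..T, u (n-1) s) * e (n-1) * (1 - e n)) := by
      rw [hE]; field_simp
    rw [hWc, hkey] at hW
    have hcpos : 0 < 1/T * ∫ s in (0:ℝ)..T, u (n-1) s := by positivity
    have h1me : 0 < 1 - e n := by linarith
    by_contra hle
    push_neg at hle
    have hm1 : (1/T * ∫ s in (0:ℝ)..T, u (n-1) s) * (∫ t in (0:ℝ)..T, x (n-1) t)
        ≤ (1/T * ∫ s in (0:ℝ)..T, u (n-1) s) * (T * e (n-1)) :=
      mul_le_mul_of_nonneg_left hle (le_of_lt hcpos)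
    have hm2 : (1/T * ∫ s in (0:ℝ)..T, u (n-1) s) * (∫ t in (0:ℝ)..T, x (n-1) t) * (1 - e n)
        ≤ (1/T * ∫ s in (0:ℝ)..T, u (n-1) s) * (T * e (n-1)) * (1 - e n) :=
      mul_le_mul_of_nonneg_right hm1 (le_of_lt h1me)
    have hr : (1/T * ∫ s in (0:ℝ)..T, u (n-1) s) * (T * e (n-1)) * (1 - e n)
        = T * ((1/T * ∫ s in (0:ℝ)..T, u (n-1) s) * e (n-1) * (1 - e n)) := by ring
    rw [hr] at hm2
    linarith only [hW, hm2]
  -- ===== BOTTOM STEP =====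
  have he1pos : 0 < e 1 := (hemem 1 le_rfl hn).1
  have he1lt : e 1 < 1 := (hemem 1 le_rfl hn).2
  have hBot : (∫ t in (0:ℝ)..T, u 1 t) * (1 - e 2) < ∫ t in (0:ℝ)..T, u 1 t * (1 - x 2 t) := by
    have cx1 : Continuous (x 1) := hxc 1 (by omega)
    have hx1pos : ∀ t, 0 < x 1 t := hxpos 1 hn
    have hx1lt : ∀ t, x 1 t < 1 := fun t => hxlt1 1 le_rfl (by omega) t
    have flux0 := Φtel n 0 (by omega)
    simp only [hx0, mul_one, hxtop, sub_zero] at flux0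
    have hA : (∫ t in (0:ℝ)..T, u n t) * e n < ∫ t in (0:ℝ)..T, u 0 t * (1 - x 1 t) := by
      rw [flux0]; exact hJ
    have hsplit : (∫ t in (0:ℝ)..T, u 0 t * (1 - x 1 t))
        = (∫ t in (0:ℝ)..T, u 0 t) - ∫ t in (0:ℝ)..T, u 0 t * x 1 t := by
      have hre : (fun t => u 0 t * (1 - x 1 t)) = fun t => u 0 t - u 0 t * x 1 t := by
        funext t; ring
      rw [hre, intervalIntegral.integral_sub ((hu_cont 0 (by omega)).intervalIntegrable 0 T)
        ((show Continuous fun t => u 0 t * x 1 t from (hu_cont 0 (by omega)).mul cx1).intervalIntegrable 0 T)]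
    have hE0 := Etel n 0 (by omega)
    rw [he0] at hE0
    have hE0' : (∫ t in (0:ℝ)..T, u 0 t) * (1 - e 1)
        = (∫ t in (0:ℝ)..T, u n t) * e n := by
      apply hTcancel
      linear_combination hE0
    have hY : (∫ t in (0:ℝ)..T, u 0 t * x 1 t) < (∫ t in (0:ℝ)..T, u 0 t) * e 1 := by
      have hr : (∫ t in (0:ℝ)..T, u 0 t) * (1 - e 1)
          = (∫ t in (0:ℝ)..T, u 0 t) - (∫ t in (0:ℝ)..T, u 0 t) * e 1 := by ring
      rw [hsplit] at hA
      linarith only [hA, hE0', hr.le, hr.ge]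
    have hYpos : 0 < ∫ t in (0:ℝ)..T, u 0 t * x 1 t :=
      POS _ ((hu_cont 0 (by omega)).mul cx1)
        (fun t => mul_pos (hu_pos 0 (by omega) t) (hx1pos t))
    have hS0 : 0 < ∫ t in (0:ℝ)..T, u 0 t := POS _ (hu_cont 0 (by omega)) (hu_pos 0 (by omega))
    have cdiv0 : Continuous fun t => u 0 t / x 1 t :=
      (hu_cont 0 (by omega)).div cx1 (fun t => ne_of_gt (hx1pos t))
    have hK0pos : 0 < ∫ t in (0:ℝ)..T, u 0 t / x 1 t :=
      POS _ cdiv0 (fun t => div_pos (hu_pos 0 (by omega) t) (hx1pos t))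
    have cs := CS (u 0) (x 1) (hu_cont 0 (by omega)) cx1 (hu_pos 0 (by omega)) hx1pos
    -- K0 * e 1 > S0
    have hK0 : (∫ t in (0:ℝ)..T, u 0 t / x 1 t) * e 1 > ∫ t in (0:ℝ)..T, u 0 t := by
      nlinarith only [cs, hY, hYpos, hK0pos, hS0]
    have hLX := LogXid 1 le_rfl hn
    simp only [Nat.sub_self, hx0, mul_one] at hLX
    have hsplit2 : (∫ t in (0:ℝ)..T, u 0 t * (1 - x 1 t) / x 1 t)
        = (∫ t in (0:ℝ)..T, u 0 t / x 1 t) - ∫ t in (0:ℝ)..T, u 0 t := by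
      have hre : (fun t => u 0 t * (1 - x 1 t) / x 1 t)
          = fun t => u 0 t / x 1 t - u 0 t := by
        funext t
        have hne : x 1 t ≠ 0 := ne_of_gt (hx1pos t)
        field_simp
      rw [hre]
      have c1 : Continuous fun t => u 0 t / x 1 t :=
        (hu_cont 0 (by omega)).div cx1 (fun t => ne_of_gt (hx1pos t))
      rw [intervalIntegral.integral_sub (c1.intervalIntegrable 0 T)
        ((hu_cont 0 (by omega)).intervalIntegrable 0 T)]
    rw [hsplit2] at hLX
    have heq1 := heq 1 le_rfl hn
    simp only [Nat.sub_self, he0] at heq1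
    have heq1' : (∫ t in (0:ℝ)..T, u 0 t) * (1 - e 1)
        = (∫ t in (0:ℝ)..T, u 1 t) * e 1 * (1 - e 2) := by
      apply hTcancel
      linear_combination heq1
    rw [← hLX]
    by_contra hle
    push_neg at hle
    have hm := mul_le_mul_of_nonneg_right hle (le_of_lt he1pos)
    linarith only [hm, hK0, heq1']
  -- ===== BOTTOM STEP, constant u 1 version =====
  have hBot2 : 2 ≤ n → (∫ t in (0:ℝ)..T, x 2 t) < T * e 2 := by
    intro hn2
    have hc1 := hconst 1 le_rfl (by omega)
    have hS1 : 0 < ∫ s in (0:ℝ)..T, u 1 s := POS _ (hu_cont 1 (by omega)) (hu_pos 1 (by omega))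
    have hcpos : 0 < 1/T * ∫ s in (0:ℝ)..T, u 1 s := by positivity
    have cx2 : Continuous (x 2) := hxc 2 (by omega)
    have hSc : (∫ t in (0:ℝ)..T, u 1 t) = T * (1/T * ∫ s in (0:ℝ)..T, u 1 s) := by
      field_simp
    rw [hSc] at hBot
    have hL : (∫ t in (0:ℝ)..T, u 1 t * (1 - x 2 t))
        = (1/T * ∫ s in (0:ℝ)..T, u 1 s) * (T - ∫ t in (0:ℝ)..T, x 2 t) := by
      have hre : (fun t => u 1 t * (1 - x 2 t))
          = fun t => (1/T * ∫ s in (0:ℝ)..T, u 1 s) * (1 - x 2 t) := by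
        funext t; rw [hc1 t]
      rw [hre, intervalIntegral.integral_const_mul]
      congr 1
      rw [intervalIntegral.integral_sub (continuous_const.intervalIntegrable 0 T)
        (cx2.intervalIntegrable 0 T)]
      simp
    rw [hL] at hBot
    by_contra hge
    push_neg at hge
    have hm : (1/T * ∫ s in (0:ℝ)..T, u 1 s) * (T - ∫ t in (0:ℝ)..T, x 2 t)
        ≤ (1/T * ∫ s in (0:ℝ)..T, u 1 s) * (T - T * e 2) :=
      mul_le_mul_of_nonneg_left (by linarith) (le_of_lt hcpos)
    nlinarith only [hBot, hm, hcpos]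
  -- ===== DESCENT STEP =====
  have hDesc : ∀ j, 1 ≤ j → j + 2 ≤ n →
      T * e (j+2) < ∫ t in (0:ℝ)..T, x (j+2) t →
      T * e j < ∫ t in (0:ℝ)..T, x j t := by
    intro j hj1 hj2 Hup
    have hcj := hconst j hj1 (by omega)
    have hci := hconst (j+1) (by omega) (by omega)
    have cxj1 : Continuous (x (j+1)) := hxc (j+1) (by omega)
    have cxj2 : Continuous (x (j+2)) := hxc (j+2) (by omega)
    have hp1 : ∀ t, 0 < x (j+1) t := hxpos (j+1) (by omega)
    have hl1 : ∀ t, x (j+1) t < 1 := fun t => hxlt1 (j+1) (by omega) (by omega) t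
    have hp2 : ∀ t, 0 < x (j+2) t := hxpos (j+2) (by omega)
    have hl2 : ∀ t, x (j+2) t < 1 := fun t => hxlt1 (j+2) (by omega) (by omega) t
    have hSj : 0 < ∫ s in (0:ℝ)..T, u j s :=
      POS _ (hu_cont j (by omega)) (hu_pos j (by omega))
    have hSi : 0 < ∫ s in (0:ℝ)..T, u (j+1) s :=
      POS _ (hu_cont (j+1) (by omega)) (hu_pos (j+1) (by omega))
    have hcjpos : 0 < 1/T * ∫ s in (0:ℝ)..T, u j s := by positivity
    have hcipos : 0 < 1/T * ∫ s in (0:ℝ)..T, u (j+1) s := by positivity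
    have hej := hemem j hj1 (by omega)
    have hei := hemem (j+1) (by omega) (by omega)
    have hei2 := hemem (j+2) (by omega) hj2
    have ch : Continuous fun t => x (j+1) t * (1 - x (j+2) t) :=
      cxj1.mul (continuous_const.sub cxj2)
    have hhp : ∀ t, 0 < x (j+1) t * (1 - x (j+2) t) :=
      fun t => mul_pos (hp1 t) (by have := hl2 t; linarith)
    -- flux identity at j+1
    have hF := Φtel (n - (j+1)) (j+1) (by omega)
    simp only [show j+1+1 = j+2 from rfl, hxtop, sub_zero, mul_one] at hF
    have hFc : (∫ t in (0:ℝ)..T, u (j+1) t * x (j+1) t * (1 - x (j+2) t))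
        = (1/T * ∫ s in (0:ℝ)..T, u (j+1) s)
          * ∫ t in (0:ℝ)..T, x (j+1) t * (1 - x (j+2) t) := by
      have hre : (fun t => u (j+1) t * x (j+1) t * (1 - x (j+2) t))
          = fun t => (1/T * ∫ s in (0:ℝ)..T, u (j+1) s) * (x (j+1) t * (1 - x (j+2) t)) := by
        funext t; rw [hci t]; ring
      rw [hre, intervalIntegral.integral_const_mul]
    rw [hFc] at hF
    -- equilibrium telescoping at j+1
    have hEi := Etel (n - (j+1)) (j+1) (by omega)
    simp only [show j+1+1 = j+2 from rfl] at hEi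
    have hRn : (∫ t in (0:ℝ)..T, u n t) * e n
        = T * ((1/T * ∫ t in (0:ℝ)..T, u (j+1) t) * e (j+1) * (1 - e (j+2))) := by
      rw [hEi]; field_simp
    -- lh > l0
    have hlpos : 0 < ∫ t in (0:ℝ)..T, x (j+1) t * (1 - x (j+2) t) := POS _ ch hhp
    have hl_gt : T * (e (j+1) * (1 - e (j+2)))
        < ∫ t in (0:ℝ)..T, x (j+1) t * (1 - x (j+2) t) := by
      by_contra hle
      push_neg at hle
      have hm := mul_le_mul_of_nonneg_left hle (le_of_lt hcipos)
      have hr : (1/T * ∫ s in (0:ℝ)..T, u (j+1) s) * (T * (e (j+1) * (1 - e (j+2))))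
          = T * ((1/T * ∫ t in (0:ℝ)..T, u (j+1) t) * e (j+1) * (1 - e (j+2))) := by ring
      rw [hr] at hm
      linarith only [hm, hF, hJ, hRn]
    -- mh facts
    have hmh_eq : (∫ t in (0:ℝ)..T, (1 - x (j+2) t)) = T - ∫ t in (0:ℝ)..T, x (j+2) t := by
      rw [intervalIntegral.integral_sub (continuous_const.intervalIntegrable 0 T)
        (cxj2.intervalIntegrable 0 T)]
      simp
    have hmh_lt : (∫ t in (0:ℝ)..T, (1 - x (j+2) t)) < T * (1 - e (j+2)) := by
      rw [hmh_eq]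
      have hr : T * (1 - e (j+2)) = T - T * e (j+2) := by ring
      linarith only [Hup, hr.le, hr.ge]
    have hlm : (∫ t in (0:ℝ)..T, x (j+1) t * (1 - x (j+2) t))
        < ∫ t in (0:ℝ)..T, (1 - x (j+2) t) := by
      have ca : Continuous fun t => (1:ℝ) - x (j+2) t := continuous_const.sub cxj2
      have cgg : Continuous fun t => (1 - x (j+1) t) * (1 - x (j+2) t) :=
        (continuous_const.sub cxj1).mul (continuous_const.sub cxj2)
      have hre : (fun t => ((1:ℝ) - x (j+2) t) - x (j+1) t * (1 - x (j+2) t))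
          = fun t => (1 - x (j+1) t) * (1 - x (j+2) t) := by
        funext t; ring
      have hd : (∫ t in (0:ℝ)..T, (((1:ℝ) - x (j+2) t) - x (j+1) t * (1 - x (j+2) t)))
          = (∫ t in (0:ℝ)..T, (1 - x (j+2) t)) - ∫ t in (0:ℝ)..T, x (j+1) t * (1 - x (j+2) t) :=
        intervalIntegral.integral_sub (ca.intervalIntegrable 0 T) (ch.intervalIntegrable 0 T)
      rw [hre] at hd
      have hpos := POS _ cgg
        (fun t => mul_pos (show (0:ℝ) < 1 - x (j+1) t from by have := hl1 t; linarith)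
          (show (0:ℝ) < 1 - x (j+2) t from by have := hl2 t; linarith))
      linarith only [hd.le, hd.ge, hpos]
    -- Cauchy-Schwarz inequalities
    have cs1 := CS (fun t => x (j+1) t * (1 - x (j+2) t)) (x (j+1)) ch cxj1 hhp hp1
    have hdivsimp : (fun t => x (j+1) t * (1 - x (j+2) t) / x (j+1) t)
        = fun t => 1 - x (j+2) t := by
      funext t
      rw [mul_comm, mul_div_assoc, div_self (ne_of_gt (hp1 t)), mul_one]
    rw [hdivsimp] at cs1
    have cs2 := CS (fun t => x (j+1) t * (1 - x (j+2) t)) (fun t => 1 - x (j+1) t)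
      ch (continuous_const.sub cxj1) hhp
      (fun t => show (0:ℝ) < 1 - x (j+1) t from by have := hl1 t; linarith)
    have hq_eq : (∫ t in (0:ℝ)..T, x (j+1) t * (1 - x (j+2) t) * (1 - x (j+1) t))
        = (∫ t in (0:ℝ)..T, x (j+1) t * (1 - x (j+2) t))
          - ∫ t in (0:ℝ)..T, x (j+1) t * (1 - x (j+2) t) * x (j+1) t := by
      have hre : (fun t => x (j+1) t * (1 - x (j+2) t) * (1 - x (j+1) t))
          = fun t => x (j+1) t * (1 - x (j+2) t)
            - x (j+1) t * (1 - x (j+2) t) * x (j+1) t := by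
        funext t; ring
      rw [hre, intervalIntegral.integral_sub (ch.intervalIntegrable 0 T)
        ((show Continuous fun t => x (j+1) t * (1 - x (j+2) t) * x (j+1) t from ch.mul cxj1).intervalIntegrable 0 T)]
    have hq_pos : 0 < ∫ t in (0:ℝ)..T, x (j+1) t * (1 - x (j+2) t) * (1 - x (j+1) t) :=
      POS _ (ch.mul (continuous_const.sub cxj1))
        (fun t => mul_pos (hhp t) (show (0:ℝ) < 1 - x (j+1) t from by have := hl1 t; linarith))
    have cdd : Continuous fun t => x (j+1) t * (1 - x (j+2) t) / (1 - x (j+1) t) :=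
      ch.div (continuous_const.sub cxj1)
        (fun t => ne_of_gt (show (0:ℝ) < 1 - x (j+1) t from by have := hl1 t; linarith))
    have hr_pos : 0 < ∫ t in (0:ℝ)..T, x (j+1) t * (1 - x (j+2) t) / (1 - x (j+1) t) :=
      POS _ cdd (fun t => div_pos (hhp t)
        (show (0:ℝ) < 1 - x (j+1) t from by have := hl1 t; linarith))
    -- Log1mX identity at j+1
    have hL := Log1mXid (j+1) (by omega) (by omega)
    simp only [Nat.add_sub_cancel, show j+1+1 = j+2 from rfl] at hL
    have hLc : (∫ t in (0:ℝ)..T, u j t * x j t)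
        = (1/T * ∫ s in (0:ℝ)..T, u j s) * ∫ t in (0:ℝ)..T, x j t := by
      have hre : (fun t => u j t * x j t)
          = fun t => (1/T * ∫ s in (0:ℝ)..T, u j s) * x j t := by
        funext t; rw [hcj t]
      rw [hre, intervalIntegral.integral_const_mul]
    have hRc : (∫ t in (0:ℝ)..T, u (j+1) t * x (j+1) t * (1 - x (j+2) t) / (1 - x (j+1) t))
        = (1/T * ∫ s in (0:ℝ)..T, u (j+1) s)
          * ∫ t in (0:ℝ)..T, x (j+1) t * (1 - x (j+2) t) / (1 - x (j+1) t) := by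
      have hre : (fun t => u (j+1) t * x (j+1) t * (1 - x (j+2) t) / (1 - x (j+1) t))
          = fun t => (1/T * ∫ s in (0:ℝ)..T, u (j+1) s)
            * (x (j+1) t * (1 - x (j+2) t) / (1 - x (j+1) t)) := by
        funext t; rw [hci t]; ring
      rw [hre, intervalIntegral.integral_const_mul]
    rw [hLc, hRc] at hL
    -- equilibrium equation at j+1
    have hq := heq (j+1) (by omega) (by omega)
    simp only [Nat.add_sub_cancel, show j+1+1 = j+2 from rfl] at hq
    -- abbreviations
    set lh := ∫ t in (0:ℝ)..T, x (j+1) t * (1 - x (j+2) t) with hlhdef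
    set mh := ∫ t in (0:ℝ)..T, (1 - x (j+2) t) with hmhdef
    set ph := ∫ t in (0:ℝ)..T, x (j+1) t * (1 - x (j+2) t) * x (j+1) t with hphdef
    set qh := ∫ t in (0:ℝ)..T, x (j+1) t * (1 - x (j+2) t) * (1 - x (j+1) t) with hqhdef
    set rh := ∫ t in (0:ℝ)..T, x (j+1) t * (1 - x (j+2) t) / (1 - x (j+1) t) with hrhdef
    set XJ := ∫ t in (0:ℝ)..T, x j t with hXJdef
    set cj := 1/T * ∫ s in (0:ℝ)..T, u j s with hcjd
    set ci := 1/T * ∫ s in (0:ℝ)..T, u (j+1) s with hcid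
    set l0 := T * (e (j+1) * (1 - e (j+2))) with hl0def
    set m0 := T * (1 - e (j+2)) with hm0def
    -- algebra
    have hl0pos : 0 < l0 := by
      rw [hl0def]
      exact mul_pos hT (mul_pos hei.1 (by linarith [hei2.2]))
    have hm0pos : 0 < m0 := by
      rw [hm0def]
      exact mul_pos hT (by linarith [hei2.2])
    have hmh_pos : 0 < mh := lt_trans hlpos hlm
    rw [hq_eq] at cs2 hq_pos
    have a1 : (lh - ph) * mh ≤ lh * (mh - lh) := by nlinarith only [cs1]
    have b1 : lh^2 * mh ≤ rh * (lh * (mh - lh)) := by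
      have t1 := mul_le_mul_of_nonneg_right cs2 (le_of_lt hmh_pos)
      have t2 := mul_le_mul_of_nonneg_right a1 (le_of_lt hr_pos)
      nlinarith only [t1, t2]
    have a2 : lh * mh ≤ rh * (mh - lh) := by
      have hb : lh * (lh * mh) ≤ lh * (rh * (mh - lh)) := by nlinarith only [b1]
      exact le_of_mul_le_mul_left hb hlpos
    have hmlh : 0 < mh - lh := by linarith
    have hm0l0 : 0 < m0 - l0 := by
      have hid : m0 - l0 = T * ((1 - e (j+2)) * (1 - e (j+1))) := by
        rw [hl0def, hm0def]; ring
      rw [hid]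
      exact mul_pos hT (mul_pos (by linarith [hei2.2]) (by linarith [hei.2]))
    have c2 : l0 * m0 * (mh - lh) < lh * mh * (m0 - l0) := by
      nlinarith only [mul_pos (mul_pos hm0pos hmh_pos) (sub_pos.2 hl_gt),
        mul_pos (mul_pos hl0pos hlpos) (sub_pos.2 hmh_lt)]
    have H : (l0 * m0) * (mh - lh) < (rh * (m0 - l0)) * (mh - lh) := by
      have t3 := mul_le_mul_of_nonneg_right a2 (le_of_lt hm0l0)
      nlinarith only [t3, c2]
    have c3 : l0 * m0 < rh * (m0 - l0) := lt_of_mul_lt_mul_right H (le_of_lt hmlh)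
    have hstep : l0 < rh * (1 - e (j+1)) := by
      have hid : m0 - l0 = m0 * (1 - e (j+1)) := by rw [hl0def, hm0def]; ring
      rw [hid] at c3
      have H2 : l0 * m0 < (rh * (1 - e (j+1))) * m0 := by nlinarith only [c3]
      exact lt_of_mul_lt_mul_right H2 (le_of_lt hm0pos)
    have hfin1 : ci * l0 < ci * (rh * (1 - e (j+1))) := mul_lt_mul_of_pos_left hstep hcipos
    have hfin2 : ci * l0 = cj * (T * e j) * (1 - e (j+1)) := by
      rw [hl0def]
      linear_combination T * hq.symm
    have hupd : ci * (rh * (1 - e (j+1))) = cj * XJ * (1 - e (j+1)) := by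
      linear_combination (1 - e (j+1)) * hL.symm
    have hfin3 : cj * (T * e j) * (1 - e (j+1)) < cj * XJ * (1 - e (j+1)) := by
      linarith only [hfin1, hfin2, hupd]
    have h1mei : 0 < 1 - e (j+1) := by linarith [hei.2]
    have hd1 : cj * (T * e j) < cj * XJ := lt_of_mul_lt_mul_right hfin3 (le_of_lt h1mei)
    exact lt_of_mul_lt_mul_left hd1 (le_of_lt hcjpos)
  -- ===== FINALE =====
  rcases eq_or_lt_of_le hn with h1 | h2
  · -- n = 1
    subst h1
    have hx2' : ∀ t, x 2 t = 0 := fun t => hxtop t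
    have he2' : e 2 = 0 := hetop
    have hsim : (∫ t in (0:ℝ)..T, u 1 t * (1 - x 2 t)) = ∫ t in (0:ℝ)..T, u 1 t := by
      simp only [hx2', sub_zero, mul_one]
    rw [hsim, he2', sub_zero, mul_one] at hBot
    exact absurd hBot (lt_irrefl _)
  · -- n ≥ 3 (n odd and n ≥ 2)
    obtain ⟨m, hm⟩ := hodd
    have hm1 : 1 ≤ m := by omega
    have hchain : ∀ k j, 2 ≤ j → n = j + 2*k + 1 → T * e j < ∫ t in (0:ℝ)..T, x j t := by
      intro k
      induction k with
      | zero =>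
        intro j hj2 hjn
        have hj : j = n - 1 := by omega
        subst hj
        exact hTop (by omega)
      | succ k ih =>
        intro j hj2 hjn
        exact hDesc j (by omega) (by omega) (ih (j+2) (by omega) (by omega))
    have hx2big := hchain (m-1) 2 le_rfl (by omega)
    have hx2small := hBot2 (by omega)
    linarith only [hx2big, hx2small]
end

section
/- Let n be even, and consider the RFM in which uᵢ(t) ≡ ūᵢ for i = 0,1,…,n-1 while u_n is an arbitrary continuous positive T-periodic function. Then there is no gain of entrainment: R_P ≤ R_C. -/
open MeasureTheory intervalIntegral Real Filter

lemma rfm_pos_integral (T : ℝ) (hT : 0 < T) (f : ℝ → ℝ) (hf : Continuous f)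
    (hpos : ∀ t, 0 < f t) : 0 < ∫ t in (0:ℝ)..T, f t :=
  intervalIntegral_pos_of_pos (hf.intervalIntegrable 0 T) hpos hT

lemma rfm_integral_deriv_periodic (T : ℝ) (F G : ℝ → ℝ)
    (hFG : ∀ t, HasDerivAt F (G t) t) (hG : Continuous G) (hper : F T = F 0) :
    ∫ t in (0:ℝ)..T, G t = 0 := by
  rw [intervalIntegral.integral_eq_sub_of_hasDerivAt (fun t _ => hFG t)
    (hG.intervalIntegrable _ _), hper, sub_self]

lemma rfm_csw (T : ℝ) (hT : 0 < T) (f a : ℝ → ℝ) (hf : Continuous f) (ha : Continuous a)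
    (hfpos : ∀ t, 0 < f t) (hapos : ∀ t, 0 < a t) :
    (∫ t in (0:ℝ)..T, f t)^2 ≤ (∫ t in (0:ℝ)..T, f t * a t) * (∫ t in (0:ℝ)..T, f t / a t) := by
  set A := ∫ t in (0:ℝ)..T, f t * a t with hA
  set B := ∫ t in (0:ℝ)..T, f t with hB
  set C := ∫ t in (0:ℝ)..T, f t / a t with hC
  have hApos : 0 < A := rfm_pos_integral T hT _ (hf.mul ha) (fun t => mul_pos (hfpos t) (hapos t))
  set lam := B / A with hlam
  have key : 0 ≤ ∫ t in (0:ℝ)..T, f t * (lam * a t - 1)^2 / a t := by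
    apply intervalIntegral.integral_nonneg hT.le
    intro t _
    have h1 := hfpos t; have h2 := hapos t
    positivity
  have expand : ∀ t, f t * (lam * a t - 1)^2 / a t
      = lam^2 * (f t * a t) - (2*lam) * f t + f t / a t := by
    intro t
    have : a t ≠ 0 := (hapos t).ne'
    field_simp
    ring
  have hint : (∫ t in (0:ℝ)..T, f t * (lam * a t - 1)^2 / a t)
      = lam^2 * A - (2*lam) * B + C := by
    rw [intervalIntegral.integral_congr (fun t _ => expand t)]
    have i1 : IntervalIntegrable (fun t => f t * a t) volume 0 T := (hf.mul ha).intervalIntegrable _ _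
    have i2 : IntervalIntegrable f volume 0 T := hf.intervalIntegrable _ _
    have i3 : IntervalIntegrable (fun t => f t / a t) volume 0 T :=
      (hf.div ha (fun t => (hapos t).ne')).intervalIntegrable _ _
    rw [intervalIntegral.integral_add ((i1.const_mul _).sub (i2.const_mul _)) i3,
      intervalIntegral.integral_sub (i1.const_mul _) (i2.const_mul _),
      intervalIntegral.integral_const_mul, intervalIntegral.integral_const_mul]
  rw [hint] at key
  have hAl : A * lam = B := by rw [hlam]; field_simp
  have h3 : 0 ≤ A * (lam^2*A - 2*lam*B + C) := mul_nonneg hApos.le (by linarith)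
  have h4 : A * (lam^2*A - 2*lam*B + C) = (A*lam)^2 - 2*(A*lam)*B + A*C := by ring
  rw [h4, hAl] at h3
  nlinarith [h3]

lemma rfm_step_alg {J S P Q : ℝ} (hJ : 0 < J) (hS : 0 ≤ S) (hP : 0 ≤ P) (hQ : 0 ≤ Q)
    (cs2 : J^2 ≤ S*P) (cs1 : J^2 ≤ (J-S)*Q) : J < P ∧ J*P ≤ Q*(P-J) := by
  have hJS : 0 < J - S := by
    by_contra h
    push_neg at h
    have h1 : (J-S)*Q ≤ 0 := mul_nonpos_of_nonpos_of_nonneg h hQ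
    nlinarith [mul_pos hJ hJ]
  have hSpos : 0 < S := by
    by_contra h
    push_neg at h
    have h1 : S*P ≤ 0 := mul_nonpos_of_nonpos_of_nonneg h hP
    nlinarith [mul_pos hJ hJ]
  have hPJ : J < P := by nlinarith [cs2, hJS, hSpos, hJ]
  refine ⟨hPJ, ?_⟩
  have h1 : J^2*(P-J) ≤ (J-S)*Q*(P-J) := mul_le_mul_of_nonneg_right cs1 (by linarith)
  have h2 : J*P*(J-S) ≤ J^2*(P-J) := by nlinarith [mul_le_mul_of_nonneg_left cs2 hJ.le]
  have h3 : (J*P)*(J-S) ≤ (Q*(P-J))*(J-S) := by nlinarith [h1, h2]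
  exact le_of_mul_le_mul_right h3 hJS

lemma rfm_cmp_alg {J R P Pe Q Qe : ℝ} (hR : 0 < R) (hRJ : R ≤ J) (hPJ : J < P)
    (hPPe : P ≤ Pe) (hkey : J*P ≤ Q*(P-J)) (he : Qe*(Pe-R) = R*Pe) : Qe ≤ Q := by
  have hJ : 0 < J := lt_of_lt_of_le hR hRJ
  have hPpos : 0 < P := lt_trans hJ hPJ
  have hPe : 0 < Pe := lt_of_lt_of_le hPpos hPPe
  have h1 : R*Pe*(P-J) ≤ J*P*(Pe-R) := by
    nlinarith [mul_nonneg (mul_nonneg hPpos.le hPe.le) (sub_nonneg.2 hRJ),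
      mul_nonneg (mul_nonneg hJ.le hR.le) (sub_nonneg.2 hPPe)]
  have h2 : J*P*(Pe-R) ≤ Q*(P-J)*(Pe-R) := mul_le_mul_of_nonneg_right hkey (by linarith)
  have h3 : Qe*((Pe-R)*(P-J)) ≤ Q*((Pe-R)*(P-J)) := by nlinarith [h1, h2, he]
  have hpos : 0 < (Pe-R)*(P-J) := mul_pos (by linarith) (by linarith)
  exact le_of_mul_le_mul_right (by nlinarith [h3]) hpos

theorem rfm_no_goe_even_only_un_varying
    (n : ℕ) (hn : 1 ≤ n) (T : ℝ) (hT : 0 < T)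
    (u : ℕ → ℝ → ℝ) (x : ℕ → ℝ → ℝ) (e : ℕ → ℝ)
    (hu_cont : ∀ i, i ≤ n → Continuous (u i))
    (hu_pos : ∀ i, i ≤ n → ∀ t, 0 < u i t)
    (hu_per : ∀ i, i ≤ n → ∀ t, u i (t + T) = u i t)
    (hx0 : ∀ t, x 0 t = 1) (hxtop : ∀ t, x (n+1) t = 0)
    (hxdiff : ∀ i, 1 ≤ i → i ≤ n → Differentiable ℝ (x i))
    (hxper : ∀ i, 1 ≤ i → i ≤ n → ∀ t, x i (t + T) = x i t)
    (hxmem : ∀ i, 1 ≤ i → i ≤ n → ∀ t, x i t ∈ Set.Ioo (0:ℝ) 1)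
    (hode : ∀ i, 1 ≤ i → i ≤ n → ∀ t,
      deriv (x i) t
        = u (i-1) t * x (i-1) t * (1 - x i t) - u i t * x i t * (1 - x (i+1) t))
    (he0 : e 0 = 1) (hetop : e (n+1) = 0)
    (hemem : ∀ i, 1 ≤ i → i ≤ n → e i ∈ Set.Ioo (0:ℝ) 1)
    (heq : ∀ i, 1 ≤ i → i ≤ n →
      (1/T * ∫ t in (0:ℝ)..T, u (i-1) t) * e (i-1) * (1 - e i)
        = (1/T * ∫ t in (0:ℝ)..T, u i t) * e i * (1 - e (i+1)))
    (heven : Even n)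
    (hconst : ∀ i, i ≤ n - 1 →
      ∀ t, u i t = 1/T * ∫ s in (0:ℝ)..T, u i s) :
    1/T * ∫ t in (0:ℝ)..T, u n t * x n t ≤ (1/T * ∫ t in (0:ℝ)..T, u n t) * e n := by
  classical
  -- abbreviations
  set ub : ℕ → ℝ := fun i => 1/T * ∫ t in (0:ℝ)..T, u i t with hub
  set m : ℕ → ℝ := fun i => 1/T * ∫ t in (0:ℝ)..T, x i t with hm
  set fl : ℕ → ℝ → ℝ := fun j t => u j t * x j t * (1 - x (j+1) t) with hfl
  set J : ℝ := 1/T * ∫ t in (0:ℝ)..T, u n t * x n t with hJ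
  set R : ℝ := ub n * e n with hR
  show J ≤ R
  -- basic facts
  have hTne : T ≠ 0 := hT.ne'
  have hxc : ∀ i, i ≤ n+1 → Continuous (x i) := by
    intro i hi
    by_cases h0 : i = 0
    · subst h0
      have : x 0 = fun _ => (1:ℝ) := funext hx0
      rw [this]; exact continuous_const
    by_cases h1 : i = n+1
    · subst h1
      have : x (n+1) = fun _ => (0:ℝ) := funext hxtop
      rw [this]; exact continuous_const
    · exact (hxdiff i (by omega) (by omega)).continuous
  have hflpos : ∀ j, j ≤ n → ∀ t, 0 < fl j t := by
    intro j hj t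
    have hu := hu_pos j hj t
    have hx1 : 0 < x j t := by
      by_cases h0 : j = 0
      · subst h0; rw [hx0 t]; norm_num
      · exact (hxmem j (by omega) hj t).1
    have hx2 : 0 < 1 - x (j+1) t := by
      by_cases h : j = n
      · subst h; rw [hxtop t]; norm_num
      · have := (hxmem (j+1) (by omega) (by omega) t).2
        linarith
    exact mul_pos (mul_pos hu hx1) hx2
  have hflc : ∀ j, j ≤ n → Continuous (fl j) := by
    intro j hj
    exact ((hu_cont j hj).mul (hxc j (by omega))).mul (continuous_const.sub (hxc (j+1) (by omega)))
  have hodefl : ∀ i, 1 ≤ i → i ≤ n → ∀ t, deriv (x i) t = fl (i-1) t - fl i t := by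
    intro i h1 h2 t
    have hi1 : i - 1 + 1 = i := by omega
    rw [hode i h1 h2 t]
    simp only [hfl, hi1]
  have hubpos : ∀ i, i ≤ n → 0 < ub i := by
    intro i hi
    rw [hub]
    have : 0 < ∫ t in (0:ℝ)..T, u i t :=
      rfm_pos_integral T hT _ (hu_cont i hi) (hu_pos i hi)
    positivity
  have hJpos : 0 < J := by
    rw [hJ]
    have : 0 < ∫ t in (0:ℝ)..T, u n t * x n t :=
      rfm_pos_integral T hT _ ((hu_cont n le_rfl).mul (hxc n (by omega)))
        (fun t => mul_pos (hu_pos n le_rfl t) (hxmem n hn le_rfl t).1)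
    positivity
  have hmI : ∀ i, (∫ t in (0:ℝ)..T, x i t) = T * m i := by
    intro i
    show (∫ t in (0:ℝ)..T, x i t) = T * (1/T * ∫ t in (0:ℝ)..T, x i t)
    field_simp
  have hmtop : m (n+1) = 0 := by
    rw [hm]
    show 1/T * ∫ t in (0:ℝ)..T, x (n+1) t = 0
    rw [intervalIntegral.integral_congr (fun t _ => hxtop t)]
    simp
  have hcu : ∀ i, i ≤ n - 1 → ∀ t, u i t = ub i := by
    intro i hi t
    rw [hub]
    exact hconst i hi t
  -- flux values
  have hder0 : ∀ i, 1 ≤ i → i ≤ n →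
      (∫ t in (0:ℝ)..T, (fl (i-1) t - fl i t)) = 0 := by
    intro i h1 h2
    have hde : ∀ t, HasDerivAt (x i) (fl (i-1) t - fl i t) t := by
      intro t
      have h := (hxdiff i h1 h2 t).hasDerivAt
      rwa [hodefl i h1 h2 t] at h
    have hcont : Continuous (fun t => fl (i-1) t - fl i t) :=
      (hflc (i-1) (by omega)).sub (hflc i h2)
    have hper : x i T = x i 0 := by
      have := hxper i h1 h2 0
      rwa [zero_add] at this
    exact rfm_integral_deriv_periodic T (x i) _ hde hcont hper
  have hfluxn : (∫ t in (0:ℝ)..T, fl n t) = T * J := by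
    have hpt : ∀ t, fl n t = u n t * x n t := by
      intro t
      simp only [hfl]
      rw [hxtop t]; ring
    rw [intervalIntegral.integral_congr (fun t _ => hpt t)]
    rw [hJ]; field_simp
  have hflux : ∀ j, j ≤ n → (∫ t in (0:ℝ)..T, fl j t) = T * J := by
    have key : ∀ k, k ≤ n → (∫ t in (0:ℝ)..T, fl (n-k) t) = T * J := by
      intro k
      induction k with
      | zero => intro _; simpa using hfluxn
      | succ k ih =>
        intro hk
        have ihv := ih (by omega)
        have h1 : 1 ≤ n - k := by omega
        have h0 := hder0 (n-k) h1 (by omega)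
        have hsub : (∫ t in (0:ℝ)..T, (fl (n-k-1) t - fl (n-k) t))
            = (∫ t in (0:ℝ)..T, fl (n-k-1) t) - ∫ t in (0:ℝ)..T, fl (n-k) t :=
          intervalIntegral.integral_sub ((hflc (n-k-1) (by omega)).intervalIntegrable _ _)
            ((hflc (n-k) (by omega)).intervalIntegrable _ _)
        have hidx : n - (k+1) = n - k - 1 := by omega
        rw [hidx]
        have : n - k - 1 = (n-k) - 1 := by omega
        rw [this] at hsub ⊢
        rw [hsub] at h0
        linarith
    intro j hj
    have := key (n-j) (by omega)
    rwa [show n-(n-j) = j from by omega] at this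
  -- B identities
  have hQv : ∀ j, 1 ≤ j → j ≤ n →
      (∫ t in (0:ℝ)..T, fl j t / (1 - x j t)) = T * (ub (j-1) * m (j-1)) := by
    intro j h1 h2
    have hxj := fun t => hxmem j h1 h2 t
    have hne : ∀ t, (1:ℝ) - x j t ≠ 0 := fun t => (sub_pos.2 (hxj t).2).ne'
    have hF : ∀ t, HasDerivAt (fun s => -Real.log (1 - x j s))
        ((fl (j-1) t - fl j t) / (1 - x j t)) t := by
      intro t
      have hx := (hxdiff j h1 h2 t).hasDerivAt
      have h1x : HasDerivAt (fun s => 1 - x j s) (-(deriv (x j) t)) t := hx.const_sub 1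
      have hlog := (h1x.log (hne t)).neg
      have : -(-(deriv (x j) t) / (1 - x j t)) = (fl (j-1) t - fl j t) / (1 - x j t) := by
        rw [hodefl j h1 h2 t]; ring
      rwa [this] at hlog
    have hGc : Continuous (fun t => (fl (j-1) t - fl j t) / (1 - x j t)) :=
      ((hflc (j-1) (by omega)).sub (hflc j h2)).div
        (continuous_const.sub (hxc j (by omega))) hne
    have hper : -Real.log (1 - x j T) = -Real.log (1 - x j 0) := by
      have := hxper j h1 h2 0
      rw [zero_add] at this
      rw [this]
    have h0 := rfm_integral_deriv_periodic T _ _ hF hGc hper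
    have i1 : IntervalIntegrable (fun t => fl (j-1) t / (1 - x j t)) volume 0 T :=
      (((hflc (j-1) (by omega)).div (continuous_const.sub (hxc j (by omega))) hne)).intervalIntegrable _ _
    have i2 : IntervalIntegrable (fun t => fl j t / (1 - x j t)) volume 0 T :=
      (((hflc j h2).div (continuous_const.sub (hxc j (by omega))) hne)).intervalIntegrable _ _
    have hsplit := intervalIntegral.integral_sub i1 i2
    have hcong : (∫ t in (0:ℝ)..T, (fl (j-1) t - fl j t) / (1 - x j t))
        = ∫ t in (0:ℝ)..T, (fl (j-1) t / (1 - x j t) - fl j t / (1 - x j t)) :=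
      intervalIntegral.integral_congr (fun t _ => (div_sub_div_same _ _ _).symm)
    rw [hcong, hsplit] at h0
    have hBid : (∫ t in (0:ℝ)..T, fl j t / (1 - x j t))
        = ∫ t in (0:ℝ)..T, fl (j-1) t / (1 - x j t) := by linarith
    rw [hBid]
    have hpt : ∀ t, fl (j-1) t / (1 - x j t) = ub (j-1) * x (j-1) t := by
      intro t
      have hj1 : j - 1 + 1 = j := by omega
      simp only [hfl, hj1]
      rw [hcu (j-1) (by omega) t, mul_div_assoc, div_self (hne t), mul_one]
    rw [intervalIntegral.integral_congr (fun t _ => hpt t),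
      intervalIntegral.integral_const_mul, hmI]
    ring
  -- P values
  have hPv : ∀ j, 1 ≤ j → j ≤ n →
      (∫ t in (0:ℝ)..T, fl j t / x j t) = T * (ub j * (1 - m (j+1))) := by
    intro j h1 h2
    have hxj := fun t => hxmem j h1 h2 t
    have hne : ∀ t, x j t ≠ 0 := fun t => (hxj t).1.ne'
    have hpt : ∀ t, fl j t / x j t = u j t * (1 - x (j+1) t) := by
      intro t
      simp only [hfl]
      have h3 : u j t * x j t * (1 - x (j+1) t) = u j t * (1 - x (j+1) t) * x j t := by ring
      rw [h3, mul_div_assoc, div_self (hne t), mul_one]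
    rw [intervalIntegral.integral_congr (fun t _ => hpt t)]
    by_cases hjn : j = n
    · subst hjn
      have hpt2 : ∀ t, u j t * (1 - x (j+1) t) = u j t := by
        intro t; rw [hxtop t]; ring
      rw [intervalIntegral.integral_congr (fun t _ => hpt2 t), hmtop]
      have hI : (∫ t in (0:ℝ)..T, u j t) = T * ub j := by
        show (∫ t in (0:ℝ)..T, u j t) = T * (1/T * ∫ t in (0:ℝ)..T, u j t)
        field_simp
      rw [hI]; ring
    · have hpt2 : ∀ t : ℝ, u j t * (1 - x (j+1) t) = ub j * (1 - x (j+1) t) :=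
        fun t => by rw [hcu j (by omega) t]
      rw [intervalIntegral.integral_congr (fun t _ => hpt2 t),
        intervalIntegral.integral_const_mul]
      have hs : (∫ t in (0:ℝ)..T, (1 - x (j+1) t))
          = T - T * m (j+1) := by
        rw [intervalIntegral.integral_sub intervalIntegrable_const
            ((hxc (j+1) (by omega)).intervalIntegrable _ _),
          hmI, intervalIntegral.integral_const]
        simp only [smul_eq_mul, sub_zero, mul_one]
      rw [hs]; ring
  -- equilibrium chain
  have heq' : ∀ i, 1 ≤ i → i ≤ n →
      ub (i-1) * e (i-1) * (1 - e i) = ub i * e i * (1 - e (i+1)) := by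
    intro i h1 h2
    have := heq i h1 h2
    rw [hub]
    exact this
  have hReAux : ∀ k, k ≤ n → ub (n-k) * e (n-k) * (1 - e (n-k+1)) = R := by
    intro k
    induction k with
    | zero =>
      intro _
      simp only [Nat.sub_zero]
      rw [hetop, hR]
      ring
    | succ k ih =>
      intro hk
      have ihv := ih (by omega)
      have h1 : 1 ≤ n - k := by omega
      have hheq := heq' (n-k) h1 (by omega)
      have e2 : n - (k+1) + 1 = n - k := by omega
      have e1 : n - (k+1) = n - k - 1 := by omega
      rw [e2, e1, hheq]
      exact ihv
  have hRe : ∀ i, i ≤ n → ub i * e i * (1 - e (i+1)) = R := by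
    intro i hi
    have := hReAux (n-i) (by omega)
    rwa [show n-(n-i) = i from by omega] at this
  have hRpos : 0 < R := by
    rw [hR]
    exact mul_pos (hubpos n le_rfl) (hemem n hn le_rfl).1
  -- main contradiction
  by_contra hcon
  push_neg at hcon
  have hRJ : R ≤ J := hcon.le
  -- the induction step
  have step : ∀ j, 2 ≤ j → j ≤ n → e (j+1) ≤ m (j+1) → e (j-1) ≤ m (j-1) := by
    intro j hj2 hjn hIH
    have hj1 : 1 ≤ j := by omega
    set S : ℝ := 1/T * ∫ t in (0:ℝ)..T, fl j t * x j t with hS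
    have hQi := hQv j hj1 hjn
    have hPi := hPv j hj1 hjn
    have hJi := hflux j hjn
    have hSi : (∫ t in (0:ℝ)..T, fl j t * x j t) = T * S := by
      rw [hS]
      show (∫ t in (0:ℝ)..T, fl j t * x j t)
        = T * (1/T * ∫ t in (0:ℝ)..T, fl j t * x j t)
      field_simp
    have hxjc := hxc j (by omega)
    have hxjpos : ∀ t, 0 < x j t := fun t => (hxmem j hj1 hjn t).1
    have hxjlt : ∀ t, 0 < 1 - x j t := fun t => sub_pos.2 (hxmem j hj1 hjn t).2
    -- CS2 : with a = x j
    have cs2' := rfm_csw T hT (fl j) (x j) (hflc j hjn) hxjc (hflpos j hjn) hxjpos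
    rw [hJi, hSi, hPi] at cs2'
    have cs2 : J^2 ≤ S * (ub j * (1 - m (j+1))) := by
      have h2 : T^2 * J^2 ≤ T^2 * (S * (ub j * (1 - m (j+1)))) := by
        calc T^2*J^2 = (T*J)^2 := by ring
        _ ≤ T*S*(T*(ub j * (1 - m (j+1)))) := cs2'
        _ = T^2 * (S * (ub j * (1 - m (j+1)))) := by ring
      exact le_of_mul_le_mul_left h2 (by positivity)
    -- CS1 : with a = 1 - x j
    have cs1' := rfm_csw T hT (fl j) (fun t => 1 - x j t) (hflc j hjn)
      (continuous_const.sub hxjc) (hflpos j hjn) hxjlt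
    have hE : (∫ t in (0:ℝ)..T, fl j t * (1 - x j t)) = T * (J - S) := by
      have hpt : ∀ t, fl j t * (1 - x j t) = fl j t - fl j t * x j t := by
        intro t; ring
      rw [intervalIntegral.integral_congr (fun t _ => hpt t),
        intervalIntegral.integral_sub ((hflc j hjn).intervalIntegrable _ _)
          (((hflc j hjn).mul hxjc).intervalIntegrable _ _) (f := fun t => fl j t)
          (g := fun t => fl j t * x j t), hJi, hSi]
      ring
    rw [hJi, hE, hQi] at cs1'
    have cs1 : J^2 ≤ (J - S) * (ub (j-1) * m (j-1)) := by
      have h2 : T^2 * J^2 ≤ T^2 * ((J - S) * (ub (j-1) * m (j-1))) := by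
        calc T^2*J^2 = (T*J)^2 := by ring
        _ ≤ T*(J-S)*(T*(ub (j-1) * m (j-1))) := cs1'
        _ = T^2 * ((J - S) * (ub (j-1) * m (j-1))) := by ring
      exact le_of_mul_le_mul_left h2 (by positivity)
    -- nonnegativity
    have hS0 : 0 ≤ S := by
      rw [hS]
      have : 0 ≤ ∫ t in (0:ℝ)..T, fl j t * x j t :=
        intervalIntegral.integral_nonneg hT.le
          (fun t _ => le_of_lt (mul_pos (hflpos j hjn t) (hxjpos t)))
      positivity
    have hP0 : 0 ≤ ub j * (1 - m (j+1)) := by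
      have h1 : 0 ≤ ∫ t in (0:ℝ)..T, fl j t / x j t :=
        intervalIntegral.integral_nonneg hT.le
          (fun t _ => le_of_lt (div_pos (hflpos j hjn t) (hxjpos t)))
      have h2 : T * 0 ≤ T * (ub j * (1 - m (j+1))) := by
        rw [mul_zero, ← hPi]; exact h1
      exact (mul_le_mul_iff_right₀ hT).mp h2
    have hQ0 : 0 ≤ ub (j-1) * m (j-1) := by
      have h1 : 0 ≤ ∫ t in (0:ℝ)..T, fl j t / (1 - x j t) :=
        intervalIntegral.integral_nonneg hT.le
          (fun t _ => le_of_lt (div_pos (hflpos j hjn t) (hxjlt t)))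
      have h2 : T * 0 ≤ T * (ub (j-1) * m (j-1)) := by
        rw [mul_zero, ← hQi]; exact h1
      exact (mul_le_mul_iff_right₀ hT).mp h2
    obtain ⟨hPJ, hkey⟩ := rfm_step_alg hJpos hS0 hP0 hQ0 cs2 cs1
    -- equilibrium side
    have hA : (ub (j-1) * e (j-1)) * (1 - e j) = R := by
      have h := hRe (j-1) (by omega)
      rw [show j - 1 + 1 = j from by omega] at h
      linear_combination h
    have hB : (ub j * (1 - e (j+1))) * e j = R := by
      have h := hRe j hjn
      linear_combination h
    have heqQe : (ub (j-1) * e (j-1)) * ((ub j * (1 - e (j+1))) - R)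
        = R * (ub j * (1 - e (j+1))) := by
      linear_combination (ub j * (1 - e (j+1))) * hA + (ub (j-1) * e (j-1)) * hB
    have hPPe : ub j * (1 - m (j+1)) ≤ ub j * (1 - e (j+1)) :=
      mul_le_mul_of_nonneg_left (by linarith [hIH]) (hubpos j hjn).le
    have hfin : ub (j-1) * e (j-1) ≤ ub (j-1) * m (j-1) :=
      rfm_cmp_alg hRpos hRJ hPJ hPPe hkey heqQe
    have hup := hubpos (j-1) (by omega)
    exact le_of_mul_le_mul_left hfin hup
  -- chain over odd sites
  have chain : ∀ k, 2*k ≤ n → e (n+1-2*k) ≤ m (n+1-2*k) := by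
    intro k
    induction k with
    | zero =>
      intro _
      simp only [Nat.mul_zero, Nat.sub_zero]
      rw [hetop, hmtop]
    | succ k ih =>
      intro hk
      have ihv := ih (by omega)
      have hj2 : 2 ≤ n - 2*k := by omega
      have hjn : n - 2*k ≤ n := by omega
      have hIH : e ((n-2*k)+1) ≤ m ((n-2*k)+1) := by
        rwa [show n+1-2*k = (n-2*k)+1 from by omega] at ihv
      have hstep := step (n-2*k) hj2 hjn hIH
      rwa [show n+1-2*(k+1) = (n-2*k)-1 from by omega]
  obtain ⟨p, hp⟩ := heven
  have hfin := chain p (by omega)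
  have he1m1 : e 1 ≤ m 1 := by
    rwa [show n+1-2*p = 1 from by omega] at hfin
  -- bottom
  have hbot : ub 0 * (1 - m 1) = J := by
    have h := hflux 0 (by omega)
    have hpt : ∀ t, fl 0 t = ub 0 * (1 - x 1 t) := by
      intro t
      simp only [hfl]
      rw [hx0 t, hcu 0 (by omega) t]
      ring
    rw [intervalIntegral.integral_congr (fun t _ => hpt t),
      intervalIntegral.integral_const_mul] at h
    have hs : (∫ t in (0:ℝ)..T, (1 - x 1 t)) = T - T * m 1 := by
      rw [intervalIntegral.integral_sub intervalIntegrable_const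
          ((hxc 1 (by omega)).intervalIntegrable _ _),
        hmI, intervalIntegral.integral_const]
      simp only [smul_eq_mul, sub_zero, mul_one]
    rw [hs] at h
    apply mul_left_cancel₀ hTne
    linear_combination h
  have hbote : ub 0 * (1 - e 1) = R := by
    have h0 := hRe 0 (Nat.zero_le n)
    rw [he0] at h0
    linear_combination h0
  have hub0 : 0 < ub 0 := hubpos 0 (by omega)
  nlinarith [hbot, hbote, hcon, mul_nonneg hub0.le (sub_nonneg.mpr he1m1)]
end

section
/- Let n be even, and consider the RFM in which uᵢ(t) ≡ ūᵢ for i = 1,…,n while u₀ is an arbitrary continuous positive T-periodic function. Then there is no gain of entrainment: R_P ≤ R_C. -/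
open MeasureTheory intervalIntegral Real Filter

set_option maxHeartbeats 2000000 in
theorem rfm_no_goe_even_only_u0_varying
    (n : ℕ) (hn : 1 ≤ n) (T : ℝ) (hT : 0 < T)
    (u : ℕ → ℝ → ℝ) (x : ℕ → ℝ → ℝ) (e : ℕ → ℝ)
    (hu_cont : ∀ i, i ≤ n → Continuous (u i))
    (hu_pos : ∀ i, i ≤ n → ∀ t, 0 < u i t)
    (hu_per : ∀ i, i ≤ n → ∀ t, u i (t + T) = u i t)
    (hx0 : ∀ t, x 0 t = 1) (hxtop : ∀ t, x (n+1) t = 0)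
    (hxdiff : ∀ i, 1 ≤ i → i ≤ n → Differentiable ℝ (x i))
    (hxper : ∀ i, 1 ≤ i → i ≤ n → ∀ t, x i (t + T) = x i t)
    (hxmem : ∀ i, 1 ≤ i → i ≤ n → ∀ t, x i t ∈ Set.Ioo (0:ℝ) 1)
    (hode : ∀ i, 1 ≤ i → i ≤ n → ∀ t,
      deriv (x i) t
        = u (i-1) t * x (i-1) t * (1 - x i t) - u i t * x i t * (1 - x (i+1) t))
    (he0 : e 0 = 1) (hetop : e (n+1) = 0)
    (hemem : ∀ i, 1 ≤ i → i ≤ n → e i ∈ Set.Ioo (0:ℝ) 1)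
    (heq : ∀ i, 1 ≤ i → i ≤ n →
      (1/T * ∫ t in (0:ℝ)..T, u (i-1) t) * e (i-1) * (1 - e i)
        = (1/T * ∫ t in (0:ℝ)..T, u i t) * e i * (1 - e (i+1)))
    (heven : Even n)
    (hconst : ∀ i, 1 ≤ i → i ≤ n →
      ∀ t, u i t = 1/T * ∫ s in (0:ℝ)..T, u i s) :
    1/T * ∫ t in (0:ℝ)..T, u n t * x n t ≤ (1/T * ∫ t in (0:ℝ)..T, u n t) * e n := by
  have hTne : T ≠ 0 := ne_of_gt hT
  have hn2 : 2 ≤ n := by rcases heven with ⟨m, hm⟩; omega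
  have hx0' : x 0 = fun _ => (1:ℝ) := funext hx0
  have hxtop' : x (n+1) = fun _ => (0:ℝ) := funext hxtop
  have hxc : ∀ i, i ≤ n+1 → Continuous (x i) := by
    intro i hi
    rcases Nat.eq_zero_or_pos i with h0 | h1
    · rw [h0, hx0']; exact continuous_const
    · rcases eq_or_lt_of_le hi with htop | hlt
      · rw [htop, hxtop']; exact continuous_const
      · exact (hxdiff i h1 (by omega)).continuous
  have hxpos : ∀ i, i ≤ n → ∀ t, (0:ℝ) < x i t := by
    intro i hi t
    rcases Nat.eq_zero_or_pos i with h0 | h1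
    · rw [h0, hx0]; norm_num
    · exact (hxmem i h1 hi t).1
  have hxlt1 : ∀ i, 1 ≤ i → i ≤ n → ∀ t, x i t < 1 := fun i h1 h2 t => (hxmem i h1 h2 t).2
  have hxne : ∀ i, i ≤ n → ∀ t, x i t ≠ 0 := fun i hi t => ne_of_gt (hxpos i hi t)
  have hposint : ∀ f : ℝ → ℝ, Continuous f → (∀ t, 0 < f t) → 0 < ∫ t in (0:ℝ)..T, f t := by
    intro f hf hp
    exact intervalIntegral.intervalIntegral_pos_of_pos_on (hf.intervalIntegrable 0 T)
      (fun t _ => hp t) hT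
  have hdc : ∀ p, p + 1 ≤ n → Continuous (deriv (x (p+1))) := by
    intro p hp
    have hEq : deriv (x (p+1)) = fun t =>
        u p t * x p t * (1 - x (p+1) t) - u (p+1) t * x (p+1) t * (1 - x (p+1+1) t) := by
      funext t
      have := hode (p+1) (by omega) hp t
      simpa using this
    rw [hEq]
    exact (((hu_cont p (by omega)).mul (hxc p (by omega))).mul
        (continuous_const.sub (hxc (p+1) (by omega)))).sub
      (((hu_cont (p+1) hp).mul (hxc (p+1) (by omega))).mul
        (continuous_const.sub (hxc (p+1+1) (by omega))))
  have hode' : ∀ p, p + 1 ≤ n → ∀ t, deriv (x (p+1)) t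
      = u p t * x p t * (1 - x (p+1) t) - u (p+1) t * x (p+1) t * (1 - x (p+1+1) t) := by
    intro p hp t
    have := hode (p+1) (by omega) hp t
    simpa using this
  have hper0 : ∀ i, 1 ≤ i → i ≤ n → x i T = x i 0 := by
    intro i h1 h2
    have := hxper i h1 h2 0
    rwa [zero_add] at this
  have hFTC : ∀ p, p + 1 ≤ n → (∫ t in (0:ℝ)..T, deriv (x (p+1)) t) = 0 := by
    intro p hp
    rw [intervalIntegral.integral_eq_sub_of_hasDerivAt
      (fun t _ => (hxdiff (p+1) (by omega) hp t).hasDerivAt)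
      ((hdc p hp).intervalIntegrable 0 T)]
    rw [hper0 (p+1) (by omega) hp]; ring
  have hFTClog : ∀ p, p + 1 ≤ n →
      (∫ t in (0:ℝ)..T, (x (p+1) t)⁻¹ * deriv (x (p+1)) t) = 0 := by
    intro p hp
    have hd : ∀ t ∈ Set.uIcc (0:ℝ) T,
        HasDerivAt (Real.log ∘ x (p+1)) ((x (p+1) t)⁻¹ * deriv (x (p+1)) t) t := by
      intro t _
      exact (Real.hasDerivAt_log (hxne (p+1) hp t)).comp t
        (hxdiff (p+1) (by omega) hp t).hasDerivAt
    rw [intervalIntegral.integral_eq_sub_of_hasDerivAt hd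
      ((((hxc (p+1) (by omega)).inv₀ (hxne (p+1) hp)).mul (hdc p hp)).intervalIntegrable 0 T)]
    simp [Function.comp, hper0 (p+1) (by omega) hp]
  have hfluxcont : ∀ j, j ≤ n → Continuous (fun t => u j t * x j t * (1 - x (j+1) t)) :=
    fun j hj => ((hu_cont j hj).mul (hxc j (by omega))).mul
      (continuous_const.sub (hxc (j+1) (by omega)))
  have hstep : ∀ p, p + 1 ≤ n →
      (∫ t in (0:ℝ)..T, u p t * x p t * (1 - x (p+1) t))
        = ∫ t in (0:ℝ)..T, u (p+1) t * x (p+1) t * (1 - x (p+1+1) t) := by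
    intro p hp
    have h0 := hFTC p hp
    have h1 : (∫ t in (0:ℝ)..T, deriv (x (p+1)) t)
        = (∫ t in (0:ℝ)..T, u p t * x p t * (1 - x (p+1) t))
          - ∫ t in (0:ℝ)..T, u (p+1) t * x (p+1) t * (1 - x (p+1+1) t) := by
      rw [← intervalIntegral.integral_sub ((hfluxcont p (by omega)).intervalIntegrable 0 T)
        ((hfluxcont (p+1) hp).intervalIntegrable 0 T)]
      exact intervalIntegral.integral_congr (fun t _ => hode' p hp t)
    rw [h1] at h0; linarith
  have hRtop : (∫ t in (0:ℝ)..T, u n t * x n t * (1 - x (n+1) t))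
      = ∫ t in (0:ℝ)..T, u n t * x n t := by
    apply intervalIntegral.integral_congr
    intro t _
    beta_reduce
    rw [hxtop t]; ring
  have hchain : ∀ k, k ≤ n → (∫ t in (0:ℝ)..T, u (n-k) t * x (n-k) t * (1 - x (n-k+1) t))
      = ∫ t in (0:ℝ)..T, u n t * x n t := by
    intro k
    induction k with
    | zero => intro _; simpa using hRtop
    | succ k ih =>
      intro hk
      have he1 : n - (k+1) + 1 = n - k := by omega
      rw [he1]
      have h2 := hstep (n - (k+1)) (by omega)
      rw [he1] at h2
      rw [h2]
      exact ih (by omega)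
  have hflux : ∀ j, j ≤ n → (∫ t in (0:ℝ)..T, u j t * x j t * (1 - x (j+1) t))
      = ∫ t in (0:ℝ)..T, u n t * x n t := by
    intro j hj
    have h3 := hchain (n - j) (by omega)
    rwa [show n - (n - j) = j from by omega] at h3
  have hH2 : ∀ p, p + 1 ≤ n →
      (∫ t in (0:ℝ)..T, u p t * x p t * (1 - x (p+1) t) / x (p+1) t)
        = ∫ t in (0:ℝ)..T, u (p+1) t * (1 - x (p+1+1) t) := by
    intro p hp
    have hcont1 : Continuous (fun t => u p t * x p t * (1 - x (p+1) t) / x (p+1) t) :=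
      (hfluxcont p (by omega)).div (hxc (p+1) (by omega)) (hxne (p+1) hp)
    have hcont2 : Continuous (fun t => u (p+1) t * (1 - x (p+1+1) t)) :=
      (hu_cont (p+1) hp).mul (continuous_const.sub (hxc (p+1+1) (by omega)))
    have h0 := hFTClog p hp
    have h1 : (∫ t in (0:ℝ)..T, (x (p+1) t)⁻¹ * deriv (x (p+1)) t)
        = (∫ t in (0:ℝ)..T, u p t * x p t * (1 - x (p+1) t) / x (p+1) t)
          - ∫ t in (0:ℝ)..T, u (p+1) t * (1 - x (p+1+1) t) := by
      rw [← intervalIntegral.integral_sub (hcont1.intervalIntegrable 0 T)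
        (hcont2.intervalIntegrable 0 T)]
      apply intervalIntegral.integral_congr
      intro t _
      beta_reduce
      have hne := hxne (p+1) hp t
      rw [hode' p hp t]
      field_simp
    rw [h1] at h0; linarith
  have hXpos : ∀ i, 1 ≤ i → i ≤ n → 0 < ∫ t in (0:ℝ)..T, x i t :=
    fun i h1 h2 => hposint _ (hxc i (by omega)) (hxpos i h2)
  have hXltT : ∀ i, 1 ≤ i → i ≤ n → (∫ t in (0:ℝ)..T, x i t) < T := by
    intro i h1 h2
    have h3 : 0 < ∫ t in (0:ℝ)..T, (1 - x i t) :=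
      hposint _ (continuous_const.sub (hxc i (by omega)))
        (fun t => by have := hxlt1 i h1 h2 t; linarith)
    have h4 : (∫ t in (0:ℝ)..T, (1 - x i t)) = T - ∫ t in (0:ℝ)..T, x i t := by
      rw [intervalIntegral.integral_sub intervalIntegrable_const
        ((hxc i (by omega)).intervalIntegrable 0 T)]
      simp
    rw [h4] at h3; linarith
  have huconst : ∀ j, 1 ≤ j → j ≤ n → ∀ t, u j t = u j 0 := by
    intro j h1 h2 t
    rw [hconst j h1 h2 t, ← hconst j h1 h2 0]
  have hkpos : ∀ j, j ≤ n → 0 < u j 0 := fun j hj => hu_pos j hj 0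
  have hWval : ∀ j, 1 ≤ j → j ≤ n →
      (∫ t in (0:ℝ)..T, u j t * x j t) = u j 0 * ∫ t in (0:ℝ)..T, x j t := by
    intro j h1 h2
    rw [← intervalIntegral.integral_const_mul]
    apply intervalIntegral.integral_congr
    intro t _; beta_reduce; rw [huconst j h1 h2 t]
  have hDval : ∀ j, 1 ≤ j → j ≤ n →
      (∫ t in (0:ℝ)..T, u j t * (1 - x (j+1) t))
        = u j 0 * (T - ∫ t in (0:ℝ)..T, x (j+1) t) := by
    intro j h1 h2
    have h4 : (∫ t in (0:ℝ)..T, (1 - x (j+1) t)) = T - ∫ t in (0:ℝ)..T, x (j+1) t := by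
      rw [intervalIntegral.integral_sub intervalIntegrable_const
        ((hxc (j+1) (by omega)).intervalIntegrable 0 T)]
      simp
    rw [← h4, ← intervalIntegral.integral_const_mul]
    apply intervalIntegral.integral_congr
    intro t _; beta_reduce; rw [huconst j h1 h2 t]
  set Rr := ∫ t in (0:ℝ)..T, u n t * x n t with hRrdef
  have hRrpos : 0 < Rr :=
    hposint _ ((hu_cont n le_rfl).mul (hxc n (by omega)))
      (fun t => mul_pos (hu_pos n le_rfl t) (hxpos n le_rfl t))
  -- the key Cauchy-Schwarz based inequality at each node
  have hdiam : ∀ p, p + 1 + 1 ≤ n →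
      (∫ t in (0:ℝ)..T, u (p+1) t * (1 - x (p+1+1) t))
          * ((∫ t in (0:ℝ)..T, u p t * x p t) - Rr)
        ≥ Rr * ∫ t in (0:ℝ)..T, u p t * x p t := by
    intro p hp
    have hp1 : p + 1 ≤ n := by omega
    have hpn : p ≤ n := by omega
    set A := ∫ t in (0:ℝ)..T, u p t * x p t with hA
    set P := ∫ t in (0:ℝ)..T, u p t * x p t * x (p+1) t with hP
    set Q := ∫ t in (0:ℝ)..T, u p t * x p t / x (p+1) t with hQ
    set D := ∫ t in (0:ℝ)..T, u (p+1) t * (1 - x (p+1+1) t) with hD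
    have hwcont : Continuous (fun t => u p t * x p t) := (hu_cont p hpn).mul (hxc p (by omega))
    have hwpos : ∀ t, 0 < u p t * x p t := fun t => mul_pos (hu_pos p hpn t) (hxpos p hpn t)
    have hx1c : Continuous (x (p+1)) := hxc (p+1) (by omega)
    have hx1pos : ∀ t, 0 < x (p+1) t := hxpos (p+1) hp1
    have hx1ne : ∀ t, x (p+1) t ≠ 0 := hxne (p+1) hp1
    have hii_w : IntervalIntegrable (fun t => u p t * x p t) volume 0 T :=
      hwcont.intervalIntegrable 0 T
    have hii_wx : IntervalIntegrable (fun t => u p t * x p t * x (p+1) t) volume 0 T :=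
      (hwcont.mul hx1c).intervalIntegrable 0 T
    have hii_flux : IntervalIntegrable (fun t => u p t * x p t * (1 - x (p+1) t)) volume 0 T :=
      (hfluxcont p hpn).intervalIntegrable 0 T
    have hii_fluxdiv : IntervalIntegrable
        (fun t => u p t * x p t * (1 - x (p+1) t) / x (p+1) t) volume 0 T :=
      ((hfluxcont p hpn).div hx1c hx1ne).intervalIntegrable 0 T
    have hii_wdiv : IntervalIntegrable (fun t => u p t * x p t / x (p+1) t) volume 0 T :=
      (hwcont.div hx1c hx1ne).intervalIntegrable 0 T
    have hPA : P = A - Rr := by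
      have h1 : A = P + Rr := by
        rw [hA, hP, ← hflux p hpn,
          ← intervalIntegral.integral_add hii_wx hii_flux]
        apply intervalIntegral.integral_congr
        intro t _; beta_reduce; ring
      linarith
    have hQA : Q = A + D := by
      rw [hQ, hD, ← hH2 p hp1, hA,
        ← intervalIntegral.integral_add hii_w hii_fluxdiv]
      apply intervalIntegral.integral_congr
      intro t _
      beta_reduce
      have hne := hx1ne t
      field_simp
      ring
    have hPpos : 0 < P :=
      hposint _ (hwcont.mul hx1c) (fun t => mul_pos (hwpos t) (hx1pos t))
    have hCS : A^2 ≤ P * Q := by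
      set l := A / P with hl
      have hquad : 0 ≤ l^2 * P - 2 * l * A + Q := by
        have hnn : 0 ≤ ∫ t in (0:ℝ)..T,
            (u p t * x p t) * (l * x (p+1) t - 1)^2 / x (p+1) t := by
          apply intervalIntegral.integral_nonneg hT.le
          intro t _
          exact div_nonneg (mul_nonneg (hwpos t).le (sq_nonneg _)) (hx1pos t).le
        have hexp0 : (∫ t in (0:ℝ)..T, (u p t * x p t) * (l * x (p+1) t - 1)^2 / x (p+1) t)
            = ∫ t in (0:ℝ)..T, ((l^2 * (u p t * x p t * x (p+1) t)
                - 2 * l * (u p t * x p t)) + u p t * x p t / x (p+1) t) := by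
          apply intervalIntegral.integral_congr
          intro t _
          beta_reduce
          have hne := hx1ne t
          field_simp
          ring
        have hexp1 : (∫ t in (0:ℝ)..T, ((l^2 * (u p t * x p t * x (p+1) t)
                - 2 * l * (u p t * x p t)) + u p t * x p t / x (p+1) t))
            = l^2 * P - 2 * l * A + Q := by
          have hii_e2 : IntervalIntegrable (fun t => l^2 * (u p t * x p t * x (p+1) t)) volume 0 T :=
            (continuous_const.mul (hwcont.mul hx1c)).intervalIntegrable 0 T
          have hii_e3 : IntervalIntegrable (fun t => 2 * l * (u p t * x p t)) volume 0 T :=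
            (continuous_const.mul hwcont).intervalIntegrable 0 T
          rw [intervalIntegral.integral_add (hii_e2.sub hii_e3) hii_wdiv,
            intervalIntegral.integral_sub hii_e2 hii_e3,
            intervalIntegral.integral_const_mul, intervalIntegral.integral_const_mul,
            ← hP, ← hA, ← hQ]
        rw [hexp0, hexp1] at hnn
        exact hnn
      have h2 : 0 ≤ P * (l^2 * P - 2 * l * A + Q) := mul_nonneg hPpos.le hquad
      have h3 : P * (l^2 * P - 2 * l * A + Q) = P * Q - A^2 := by
        rw [hl]; field_simp; ring
      nlinarith [h2, h3]
    rw [hPA, hQA] at hCS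
    nlinarith [hCS]
  -- equilibrium chain
  have hstepE : ∀ p, 1 ≤ p → p + 1 ≤ n →
      (1/T * ∫ t in (0:ℝ)..T, u p t) * e p * (1 - e (p+1))
        = (1/T * ∫ t in (0:ℝ)..T, u (p+1) t) * e (p+1) * (1 - e (p+1+1)) := by
    intro p h1 h2
    have := heq (p+1) (by omega) h2
    simpa using this
  have hchainE : ∀ k, k + 1 ≤ n →
      (1/T * ∫ t in (0:ℝ)..T, u (n-k) t) * e (n-k) * (1 - e (n-k+1))
        = (1/T * ∫ t in (0:ℝ)..T, u n t) * e n * (1 - e (n+1)) := by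
    intro k
    induction k with
    | zero => intro _; simp
    | succ k ih =>
      intro hk
      have he1 : n - (k+1) + 1 = n - k := by omega
      rw [he1]
      have h2 := hstepE (n - (k+1)) (by omega) (by omega)
      rw [he1] at h2
      rw [h2]
      exact ih (by omega)
  have hEqj : ∀ j, 1 ≤ j → j ≤ n →
      (1/T * ∫ t in (0:ℝ)..T, u j t) * e j * (1 - e (j+1))
        = (1/T * ∫ t in (0:ℝ)..T, u n t) * e n := by
    intro j h1 h2
    have h3 := hchainE (n - j) (by omega)
    rw [show n - (n - j) = j from by omega] at h3
    rw [h3, hetop]; ring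
  have hEq0 : (1/T * ∫ t in (0:ℝ)..T, u 0 t) * (1 - e 1)
      = (1/T * ∫ t in (0:ℝ)..T, u n t) * e n := by
    have h1 := heq 1 le_rfl hn
    rw [hEqj 1 le_rfl hn] at h1
    norm_num [he0] at h1
    simp only [one_div]
    linarith [h1]
  -- pass to constants
  have hcn : (1/T * ∫ t in (0:ℝ)..T, u n t) = u n 0 := (hconst n hn le_rfl 0).symm
  set RC := u n 0 * e n * T with hRCdef
  have hRCpos : 0 < RC :=
    mul_pos (mul_pos (hkpos n le_rfl) (hemem n hn le_rfl).1) hT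
  have hEqj' : ∀ j, 1 ≤ j → j ≤ n → u j 0 * e j * (1 - e (j+1)) * T = RC := by
    intro j h1 h2
    have h3 := hEqj j h1 h2
    rw [← hconst j h1 h2 0, hcn] at h3
    rw [hRCdef]
    linear_combination T * h3
  have hEq0' : (∫ t in (0:ℝ)..T, u 0 t) * (1 - e 1) = RC := by
    have h3 := hEq0
    rw [hcn] at h3
    rw [hRCdef]
    have h4 : T * ((1/T * ∫ t in (0:ℝ)..T, u 0 t) * (1 - e 1)) = T * (u n 0 * e n) := by
      rw [h3]
    field_simp at h4
    linarith [h4]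
  have hRn : Rr = u n 0 * ∫ t in (0:ℝ)..T, x n t := by
    rw [hRrdef]; exact hWval n hn le_rfl
  -- main argument by contradiction
  by_contra hcon
  push_neg at hcon
  rw [hcn] at hcon
  have hRC_lt : RC < Rr := by
    rw [hRCdef]
    have h5 : u n 0 * e n < 1/T * Rr := hcon
    have h6 : (u n 0 * e n) * T < (1/T * Rr) * T := (mul_lt_mul_iff_left₀ hT).mpr h5
    have h7 : (1/T * Rr) * T = Rr := by field_simp
    linarith [h6, h7]
  -- downward induction over even indices
  have hmain : ∀ k, ∀ i, 2 ≤ i → i + 2*k = n → e i * T < ∫ t in (0:ℝ)..T, x i t := by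
    intro k
    induction k with
    | zero =>
      intro i h2 hin
      have hin' : i = n := by omega
      subst hin'
      have h8 := hRC_lt
      rw [hRCdef, hRn] at h8
      have h9 : u i 0 * (e i * T) < u i 0 * (∫ t in (0:ℝ)..T, x i t) := by nlinarith [h8]
      exact lt_of_mul_lt_mul_left h9 (hkpos i le_rfl).le
    | succ k ih =>
      intro i h2 hin
      have hi2n : i + 1 + 1 ≤ n := by omega
      have hIH := ih (i+1+1) (by omega) (by omega)
      have hk_i : 0 < u i 0 := hkpos i (by omega)
      have hk_i1 : 0 < u (i+1) 0 := hkpos (i+1) (by omega)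
      have hXi_pos : 0 < ∫ t in (0:ℝ)..T, x i t := hXpos i (by omega) (by omega)
      have hXi2_lt : (∫ t in (0:ℝ)..T, x (i+1+1) t) < T := hXltT (i+1+1) (by omega) hi2n
      have he_i1 := hemem (i+1) (by omega) (by omega)
      have he_i2 := hemem (i+1+1) (by omega) hi2n
      have he_i := hemem i (by omega) (by omega)
      have hd := hdiam i hi2n
      rw [hWval i (by omega) (by omega), hDval (i+1) (by omega) (by omega)] at hd
      have heq1 := hEqj' (i+1) (by omega) (by omega)
      have heq2 := hEqj' i (by omega) (by omega)
      set Xi := ∫ t in (0:ℝ)..T, x i t with hXidef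
      set Xi2 := ∫ t in (0:ℝ)..T, x (i+1+1) t with hXi2def
      -- hd : u (i+1) 0 * (T - Xi2) * (u i 0 * Xi - Rr) ≥ Rr * (u i 0 * Xi)
      have s1 : 0 < u i 0 * Xi - Rr := by
        by_contra hcc
        push_neg at hcc
        have h12 : u (i+1) 0 * (T - Xi2) * (u i 0 * Xi - Rr) ≤ 0 :=
          mul_nonpos_of_nonneg_of_nonpos (mul_pos hk_i1 (by linarith : (0:ℝ) < T - Xi2)).le hcc
        have h13 : 0 < Rr * (u i 0 * Xi) := mul_pos hRrpos (mul_pos hk_i hXi_pos)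
        linarith [hd]
      have hlt2 : u (i+1) 0 * (T - Xi2) < u (i+1) 0 * ((1 - e (i+1+1)) * T) := by
        have h10 : T - Xi2 < (1 - e (i+1+1)) * T := by nlinarith [hIH]
        exact (mul_lt_mul_iff_right₀ hk_i1).mpr h10
      have s2' : RC * (u i 0 * Xi)
          < (u i 0 * Xi - Rr) * (u (i+1) 0 * (1 - e (i+1+1)) * T) := by
        calc RC * (u i 0 * Xi) < Rr * (u i 0 * Xi) := by
              exact (mul_lt_mul_iff_left₀ (mul_pos hk_i hXi_pos)).mpr hRC_lt
        _ ≤ u (i+1) 0 * (T - Xi2) * (u i 0 * Xi - Rr) := hd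
        _ < (u (i+1) 0 * ((1 - e (i+1+1)) * T)) * (u i 0 * Xi - Rr) := by
              exact (mul_lt_mul_iff_left₀ s1).mpr hlt2
        _ = (u i 0 * Xi - Rr) * (u (i+1) 0 * (1 - e (i+1+1)) * T) := by ring
      have hsub : e (i+1) * (u (i+1) 0 * (1 - e (i+1+1)) * T) = RC := by
        linear_combination heq1
      have he1pos := he_i1.1
      have h6 : e (i+1) * (RC * (u i 0 * Xi)) < (u i 0 * Xi - Rr) * RC := by
        calc e (i+1) * (RC * (u i 0 * Xi))
            < e (i+1) * ((u i 0 * Xi - Rr) * (u (i+1) 0 * (1 - e (i+1+1)) * T)) :=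
              (mul_lt_mul_iff_right₀ he1pos).mpr s2'
        _ = (u i 0 * Xi - Rr) * (e (i+1) * (u (i+1) 0 * (1 - e (i+1+1)) * T)) := by ring
        _ = (u i 0 * Xi - Rr) * RC := by rw [hsub]
      have h7 : (e (i+1) * (u i 0 * Xi)) * RC < (u i 0 * Xi - Rr) * RC := by
        nlinarith [h6]
      have s2 : e (i+1) * (u i 0 * Xi) < u i 0 * Xi - Rr :=
        (mul_lt_mul_iff_left₀ hRCpos).mp h7
      have s3 : Rr < (1 - e (i+1)) * (u i 0 * Xi) := by nlinarith [s2]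
      have s4 : e i * T * Rr < RC * Xi := by
        have h11 : RC * Xi = (e i * T) * ((1 - e (i+1)) * (u i 0 * Xi)) := by
          linear_combination (-Xi) * heq2
        rw [h11]
        exact (mul_lt_mul_iff_right₀ (mul_pos he_i.1 hT)).mpr s3
      have s5 : RC * Xi < Rr * Xi := (mul_lt_mul_iff_left₀ hXi_pos).mpr hRC_lt
      have s6 : e i * T * Rr < Rr * Xi := lt_trans s4 s5
      by_contra hcc
      push_neg at hcc
      nlinarith [s6, mul_le_mul_of_nonneg_right hcc hRrpos.le]
  -- final step at node 1
  obtain ⟨m, hm⟩ := heven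
  have hfin := hmain (m - 1) 2 le_rfl (by omega)
  have hd0 := hdiam 0 (by omega)
  norm_num at hd0
  have hU0eq : (∫ t in (0:ℝ)..T, u 0 t * x 0 t) = ∫ t in (0:ℝ)..T, u 0 t := by
    apply intervalIntegral.integral_congr
    intro t _; beta_reduce; rw [hx0 t]; ring
  have hU0pos : 0 < ∫ t in (0:ℝ)..T, u 0 t :=
    hposint _ (hu_cont 0 (by omega)) (hu_pos 0 (by omega))
  rw [hU0eq, hDval 1 le_rfl hn] at hd0
  set U0 := ∫ t in (0:ℝ)..T, u 0 t with hU0def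
  set X2 := ∫ t in (0:ℝ)..T, x 2 t with hX2def
  -- hd0 : u 1 0 * (T - X2) * (U0 - Rr) ≥ Rr * U0
  have he1m := hemem 1 le_rfl hn
  have he2m := hemem 2 (by omega) hn2
  have hk1 : 0 < u 1 0 := hkpos 1 hn
  have s1 : 0 < U0 - Rr := by
    by_contra hcc
    push_neg at hcc
    have h12 : u 1 0 * (T - X2) * (U0 - Rr) ≤ 0 :=
      mul_nonpos_of_nonneg_of_nonpos
        (mul_pos hk1 (sub_pos.mpr (show X2 < T from hXltT 2 (by omega) hn2))).le hcc
    have h13 : 0 < Rr * U0 := mul_pos hRrpos hU0pos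
    linarith [hd0]
  have hlt2 : u 1 0 * (T - X2) < u 1 0 * ((1 - e 2) * T) := by
    have h10 : T - X2 < (1 - e 2) * T := by nlinarith [hfin]
    exact (mul_lt_mul_iff_right₀ hk1).mpr h10
  have s2' : RC * U0 < (U0 - Rr) * (u 1 0 * (1 - e 2) * T) := by
    calc RC * U0 < Rr * U0 := (mul_lt_mul_iff_left₀ hU0pos).mpr hRC_lt
    _ ≤ u 1 0 * (T - X2) * (U0 - Rr) := hd0
    _ < (u 1 0 * ((1 - e 2) * T)) * (U0 - Rr) := (mul_lt_mul_iff_left₀ s1).mpr hlt2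
    _ = (U0 - Rr) * (u 1 0 * (1 - e 2) * T) := by ring
  have heqA := hEqj' 1 le_rfl hn
  have hsub : e 1 * (u 1 0 * (1 - e 2) * T) = RC := by
    linear_combination heqA
  have h6 : e 1 * (RC * U0) < (U0 - Rr) * RC := by
    calc e 1 * (RC * U0) < e 1 * ((U0 - Rr) * (u 1 0 * (1 - e 2) * T)) :=
          (mul_lt_mul_iff_right₀ he1m.1).mpr s2'
    _ = (U0 - Rr) * (e 1 * (u 1 0 * (1 - e 2) * T)) := by ring
    _ = (U0 - Rr) * RC := by rw [hsub]
  have h7 : (e 1 * U0) * RC < (U0 - Rr) * RC := by nlinarith [h6]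
  have s2 : e 1 * U0 < U0 - Rr := (mul_lt_mul_iff_left₀ hRCpos).mp h7
  -- hEq0' : U0 * (1 - e 1) = RC, i.e. U0 - U0 * e 1 = RC
  nlinarith [s2, hEq0', hRC_lt]
end

section
/- Call a T-periodic solution γ: [0,T) → (0,1)ⁿ of the RFM non-degenerate if no coordinate γᵢ is constant. Suppose n is odd and for every i ∈ {1,3,…,n-2} there exists αᵢ > 0 with uᵢ(t) = αᵢ u_{i+1}(t) for all t. If the T-periodic solution is non-degenerate, then R_P < R_C strictly. -/
open MeasureTheory intervalIntegral Real Filter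

/-- Integral of a nonneg continuous function, positive at a point of [0,T), is positive. -/
lemma integral_pos_pt {T : ℝ} (hT : 0 < T) (g : ℝ → ℝ) (hg : Continuous g)
    (h0 : ∀ t, 0 ≤ g t) (t0 : ℝ) (ht0 : t0 ∈ Set.Ico 0 T) (hpos : 0 < g t0) :
    0 < ∫ t in (0:ℝ)..T, g t := by
  obtain ⟨ht0l, ht0r⟩ := ht0
  obtain ⟨δ, hδ, hball⟩ := Metric.continuousAt_iff.mp (hg.continuousAt (x := t0)) (g t0) hpos
  set b : ℝ := min (t0 + δ/2) T with hb
  have hbt0 : t0 < b := lt_min (by linarith) ht0r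
  have hbT : b ≤ T := min_le_right _ _
  have hmid : 0 < ∫ t in t0..b, g t := by
    apply intervalIntegral_pos_of_pos_on (hg.intervalIntegrable _ _) _ hbt0
    intro t ht
    have h1 : dist t t0 < δ := by
      rw [Real.dist_eq, abs_of_pos (by linarith [ht.1])]
      have : t < t0 + δ/2 := lt_of_lt_of_le ht.2 (min_le_left _ _)
      linarith
    have := hball h1
    rw [Real.dist_eq] at this
    have := abs_lt.mp this
    linarith [this.1]
  have h1 : 0 ≤ ∫ t in (0:ℝ)..t0, g t :=
    intervalIntegral.integral_nonneg ht0l (fun t _ => h0 t)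
  have h2 : 0 ≤ ∫ t in b..T, g t :=
    intervalIntegral.integral_nonneg hbT (fun t _ => h0 t)
  have e1 : (∫ t in (0:ℝ)..t0, g t) + ∫ t in t0..b, g t = ∫ t in (0:ℝ)..b, g t :=
    intervalIntegral.integral_add_adjacent_intervals (μ := volume)
      (hg.intervalIntegrable 0 t0) (hg.intervalIntegrable t0 b)
  have e2 : (∫ t in (0:ℝ)..b, g t) + ∫ t in b..T, g t = ∫ t in (0:ℝ)..T, g t :=
    intervalIntegral.integral_add_adjacent_intervals (μ := volume)
      (hg.intervalIntegrable 0 b) (hg.intervalIntegrable b T)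
  linarith

/-- flux identity from periodicity -/
lemma site_flux {T : ℝ} (a b X : ℝ → ℝ) (ha : Continuous a) (hb : Continuous b)
    (hX : Differentiable ℝ X) (hper : X T = X 0)
    (hode : ∀ t, deriv X t = a t * (1 - X t) - b t * X t) :
    ∫ t in (0:ℝ)..T, a t * (1 - X t) = ∫ t in (0:ℝ)..T, b t * X t := by
  have hXc := hX.continuous
  have hd : deriv X = fun t => a t * (1 - X t) - b t * X t := funext hode
  have hdc : Continuous (deriv X) := by rw [hd]; fun_prop
  have h0 : ∫ t in (0:ℝ)..T, deriv X t = 0 := by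
    rw [intervalIntegral.integral_deriv_eq_sub (fun t _ => hX t) (hdc.intervalIntegrable _ _),
      hper, sub_self]
  have h1 : ∫ t in (0:ℝ)..T, (a t * (1 - X t) - b t * X t) = 0 :=
    (intervalIntegral.integral_congr (μ := volume) (a := (0:ℝ)) (b := T)
      (fun t _ => (hode t).symm)).trans h0
  have hi1 : IntervalIntegrable (fun t => a t * (1 - X t)) volume 0 T :=
    (by fun_prop : Continuous fun t => a t * (1 - X t)).intervalIntegrable _ _
  have hi2 : IntervalIntegrable (fun t => b t * X t) volume 0 T :=
    (by fun_prop : Continuous fun t => b t * X t).intervalIntegrable _ _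
  rw [intervalIntegral.integral_sub hi1 hi2] at h1
  linarith

/-- second moment identity -/
lemma site_flux2 {T : ℝ} (a b X : ℝ → ℝ) (ha : Continuous a) (hb : Continuous b)
    (hX : Differentiable ℝ X) (hper : X T = X 0)
    (hode : ∀ t, deriv X t = a t * (1 - X t) - b t * X t) :
    ∫ t in (0:ℝ)..T, (a t + b t) * X t ^ 2 = ∫ t in (0:ℝ)..T, a t * X t := by
  have hXc := hX.continuous
  set f : ℝ → ℝ := fun t => X t * X t with hf
  have hfd : Differentiable ℝ f := hX.mul hX
  have hfder : ∀ t, deriv f t = 2 * (a t * X t) - 2 * ((a t + b t) * X t ^ 2) := by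
    intro t
    have := deriv_fun_mul (hX t) (hX t)
    rw [hf]
    rw [this, hode t]
    ring
  have hd : deriv f = fun t => 2 * (a t * X t) - 2 * ((a t + b t) * X t ^ 2) := funext hfder
  have hdc : Continuous (deriv f) := by rw [hd]; fun_prop
  have h0 : ∫ t in (0:ℝ)..T, deriv f t = 0 := by
    rw [intervalIntegral.integral_deriv_eq_sub (fun t _ => hfd t) (hdc.intervalIntegrable _ _)]
    simp [hf, hper]
  have h1 : ∫ t in (0:ℝ)..T, (2 * (a t * X t) - 2 * ((a t + b t) * X t ^ 2)) = 0 :=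
    (intervalIntegral.integral_congr (μ := volume) (a := (0:ℝ)) (b := T)
      (fun t _ => (hfder t).symm)).trans h0
  have hi2 : IntervalIntegrable (fun t => 2 * ((a t + b t) * X t ^ 2)) volume 0 T :=
    (by fun_prop : Continuous fun t => 2 * ((a t + b t) * X t ^ 2)).intervalIntegrable _ _
  have hi1 : IntervalIntegrable (fun t => 2 * (a t * X t)) volume 0 T :=
    (by fun_prop : Continuous fun t => 2 * (a t * X t)).intervalIntegrable _ _
  rw [intervalIntegral.integral_sub hi1 hi2,
    intervalIntegral.integral_const_mul, intervalIntegral.integral_const_mul] at h1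
  linarith

/-- the key per-site strict inequality -/
lemma site_var {T : ℝ} (hT : 0 < T) (a b X : ℝ → ℝ)
    (ha : Continuous a) (hb : Continuous b) (hX : Differentiable ℝ X)
    (hap : ∀ t, 0 < a t) (hbp : ∀ t, 0 < b t)
    (hXper : ∀ t, X (t + T) = X t)
    (hode : ∀ t, deriv X t = a t * (1 - X t) - b t * X t)
    (hnc : ∀ c : ℝ, ∃ t, X t ≠ c) :
    (∫ t in (0:ℝ)..T, a t * (1 - X t)) * ((∫ t in (0:ℝ)..T, a t) + ∫ t in (0:ℝ)..T, b t)
      < (∫ t in (0:ℝ)..T, a t) * ∫ t in (0:ℝ)..T, b t := by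
  have hXc := hX.continuous
  set IA := ∫ t in (0:ℝ)..T, a t with hIA
  set IB := ∫ t in (0:ℝ)..T, b t with hIB
  set CA := ∫ t in (0:ℝ)..T, a t * X t with hCA
  set JJ := ∫ t in (0:ℝ)..T, a t * (1 - X t) with hJJ
  have hIApos : 0 < IA :=
    intervalIntegral_pos_of_pos_on (ha.intervalIntegrable _ _) (fun t _ => hap t) hT
  have hIBpos : 0 < IB :=
    intervalIntegral_pos_of_pos_on (hb.intervalIntegrable _ _) (fun t _ => hbp t) hT
  set S := IA + IB with hS
  have hSpos : 0 < S := by positivity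
  -- JJ = IA - CA
  have hJJ2 : JJ = IA - CA := by
    rw [hJJ, hIA, hCA, ← intervalIntegral.integral_sub (ha.intervalIntegrable _ _)
      ((by fun_prop : Continuous fun t => a t * X t).intervalIntegrable _ _)]
    exact intervalIntegral.integral_congr fun t _ => by ring
  have hQ : ∫ t in (0:ℝ)..T, (a t + b t) * X t ^ 2 = CA :=
    site_flux2 a b X ha hb hX (by rw [← hXper 0, zero_add]) hode
  have hflux : JJ = ∫ t in (0:ℝ)..T, b t * X t :=
    site_flux a b X ha hb hX (by rw [← hXper 0, zero_add]) hode
  -- ∫ (a+b) X = IA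
  have hSX : ∫ t in (0:ℝ)..T, (a t + b t) * X t = IA := by
    have hsplit : ∫ t in (0:ℝ)..T, (a t + b t) * X t
        = (∫ t in (0:ℝ)..T, a t * X t) + ∫ t in (0:ℝ)..T, b t * X t := by
      rw [← intervalIntegral.integral_add
        ((by fun_prop : Continuous fun t => a t * X t).intervalIntegrable _ _)
        ((by fun_prop : Continuous fun t => b t * X t).intervalIntegrable _ _)]
      exact intervalIntegral.integral_congr fun t _ => by ring
    rw [hsplit, ← hCA, ← hflux, hJJ2]; ring
  -- variance positivity
  have hP : 0 < ∫ t in (0:ℝ)..T, (a t + b t) * (S * X t - IA) ^ 2 := by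
    obtain ⟨t1, ht1⟩ := hnc (IA / S)
    have hperiodic : Function.Periodic X T := hXper
    obtain ⟨t0, ht0, hXt0⟩ := hperiodic.exists_mem_Ico₀ hT t1
    apply integral_pos_pt hT _ (by fun_prop)
      (fun t => mul_nonneg (by linarith [hap t, hbp t]) (sq_nonneg _)) t0 ht0
    have hne : S * X t0 - IA ≠ 0 := by
      rw [hXt0] at ht1
      intro h
      apply ht1
      rw [eq_div_iff (ne_of_gt hSpos)]
      linarith
    have h1 : 0 < (S * X t0 - IA) ^ 2 :=
      lt_of_le_of_ne (sq_nonneg _) (Ne.symm (pow_ne_zero 2 hne))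
    have h2 : 0 < a t0 + b t0 := by linarith [hap t0, hbp t0]
    exact mul_pos h2 h1
  -- expand variance
  have e3 : ∫ t in (0:ℝ)..T, (a t + b t) = IA + IB :=
    intervalIntegral.integral_add (ha.intervalIntegrable _ _) (hb.intervalIntegrable _ _)
  have hexp : ∫ t in (0:ℝ)..T, (a t + b t) * (S * X t - IA) ^ 2
      = S ^ 2 * CA - 2 * S * IA * IA + IA ^ 2 * (IA + IB) := by
    have step1 : ∫ t in (0:ℝ)..T, (a t + b t) * (S * X t - IA) ^ 2
        = ∫ t in (0:ℝ)..T, (S ^ 2 * ((a t + b t) * X t ^ 2)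
            - 2 * S * IA * ((a t + b t) * X t) + IA ^ 2 * (a t + b t)) :=
      intervalIntegral.integral_congr fun t _ => by ring
    have hiq : IntervalIntegrable (fun t => S ^ 2 * ((a t + b t) * X t ^ 2)) volume 0 T :=
      (by fun_prop : Continuous fun t => S ^ 2 * ((a t + b t) * X t ^ 2)).intervalIntegrable _ _
    have hil : IntervalIntegrable (fun t => 2 * S * IA * ((a t + b t) * X t)) volume 0 T :=
      (by fun_prop : Continuous fun t => 2 * S * IA * ((a t + b t) * X t)).intervalIntegrable _ _
    have hic : IntervalIntegrable (fun t => IA ^ 2 * (a t + b t)) volume 0 T :=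
      (by fun_prop : Continuous fun t => IA ^ 2 * (a t + b t)).intervalIntegrable _ _
    rw [step1, intervalIntegral.integral_add (hiq.sub hil) hic,
      intervalIntegral.integral_sub hiq hil,
      intervalIntegral.integral_const_mul, intervalIntegral.integral_const_mul,
      intervalIntegral.integral_const_mul, e3, hQ, hSX]
  rw [hexp] at hP
  -- conclude
  have hkey : IA ^ 2 < CA * S := by nlinarith [hSpos, hP, hS]
  rw [hJJ2]
  nlinarith [hkey]

/-- comparison step -/
lemma cmp_step {J JE A Ah B Bh : ℝ} (hA : 0 < A) (hB : 0 < B) (hAh : 0 < Ah) (hBh : 0 < Bh)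
    (hJE : 0 < JE) (hJ : JE ≤ J) (hBB : B ≤ Bh)
    (hsite : J * (A + B) < A * B) (heqs : JE * (Ah + Bh) = Ah * Bh) : Ah < A := by
  by_contra hcon
  push_neg at hcon
  nlinarith [mul_pos hA hB, mul_pos hAh hBh, mul_nonneg (mul_nonneg hA.le hAh.le) (sub_nonneg.mpr hBB),
    mul_nonneg (mul_nonneg hB.le hBh.le) (sub_nonneg.mpr hcon),
    mul_le_mul_of_nonneg_right hJ (by positivity : (0:ℝ) ≤ (A+B)*(Ah+Bh))]

/-- downward chain -/
lemma chain_down (F : ℕ → ℝ) (n : ℕ) (h : ∀ i, 1 ≤ i → i ≤ n → F (i - 1) = F i) :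
    ∀ i, i ≤ n → F i = F n := by
  have key : ∀ k, k ≤ n → F (n - k) = F n := by
    intro k
    induction k with
    | zero => intro _; simp
    | succ k ih =>
      intro hk
      have h1 := ih (by omega)
      have h2 := h (n - k) (by omega) (by omega)
      rw [show n - (k + 1) = (n - k) - 1 by omega, h2, h1]
  intro i hi
  have := key (n - i) (by omega)
  rwa [show n - (n - i) = i by omega] at this

theorem rfm_strict_no_goe_nondegenerate
    (n : ℕ) (hn : 1 ≤ n) (T : ℝ) (hT : 0 < T)
    (u : ℕ → ℝ → ℝ) (x : ℕ → ℝ → ℝ) (e : ℕ → ℝ)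
    (hu_cont : ∀ i, i ≤ n → Continuous (u i))
    (hu_pos : ∀ i, i ≤ n → ∀ t, 0 < u i t)
    (hu_per : ∀ i, i ≤ n → ∀ t, u i (t + T) = u i t)
    (hx0 : ∀ t, x 0 t = 1) (hxtop : ∀ t, x (n+1) t = 0)
    (hxdiff : ∀ i, 1 ≤ i → i ≤ n → Differentiable ℝ (x i))
    (hxper : ∀ i, 1 ≤ i → i ≤ n → ∀ t, x i (t + T) = x i t)
    (hxmem : ∀ i, 1 ≤ i → i ≤ n → ∀ t, x i t ∈ Set.Ioo (0:ℝ) 1)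
    (hode : ∀ i, 1 ≤ i → i ≤ n → ∀ t,
      deriv (x i) t
        = u (i-1) t * x (i-1) t * (1 - x i t) - u i t * x i t * (1 - x (i+1) t))
    (he0 : e 0 = 1) (hetop : e (n+1) = 0)
    (hemem : ∀ i, 1 ≤ i → i ≤ n → e i ∈ Set.Ioo (0:ℝ) 1)
    (heq : ∀ i, 1 ≤ i → i ≤ n →
      (1/T * ∫ t in (0:ℝ)..T, u (i-1) t) * e (i-1) * (1 - e i)
        = (1/T * ∫ t in (0:ℝ)..T, u i t) * e i * (1 - e (i+1)))
    (hodd : Odd n)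
    (hprop : ∀ i, Odd i → i ≤ n - 2 →
      ∃ α : ℝ, 0 < α ∧ ∀ t, u i t = α * u (i+1) t)
    (hnondeg : ∀ i, 1 ≤ i → i ≤ n → ¬ ∃ c : ℝ, ∀ t, x i t = c) :
    1/T * ∫ t in (0:ℝ)..T, u n t * x n t < (1/T * ∫ t in (0:ℝ)..T, u n t) * e n := by
  have hT' : T ≠ 0 := ne_of_gt hT
  -- continuity of x i
  have hxc : ∀ i, i ≤ n + 1 → Continuous (x i) := by
    intro i hi
    by_cases h0 : i = 0
    · subst h0; exact continuous_const.congr (fun t => (hx0 t).symm)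
    · by_cases hn1 : i = n + 1
      · subst hn1; exact continuous_const.congr (fun t => (hxtop t).symm)
      · exact (hxdiff i (by omega) (by omega)).continuous
  have hxpos : ∀ i, i ≤ n → ∀ t, 0 < x i t := by
    intro i hi t
    by_cases h0 : i = 0
    · subst h0; rw [hx0]; norm_num
    · exact (hxmem i (by omega) hi t).1
  have hxlt : ∀ i, 1 ≤ i → i ≤ n + 1 → ∀ t, x i t < 1 := by
    intro i h1 hi t
    by_cases hn1 : i = n + 1
    · subst hn1; rw [hxtop]; norm_num
    · exact (hxmem i h1 (by omega) t).2
  -- strict site inequality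
  have hsite : ∀ i, 1 ≤ i → i ≤ n →
      (∫ t in (0:ℝ)..T, u (i-1) t * x (i-1) t * (1 - x i t)) *
        ((∫ t in (0:ℝ)..T, u (i-1) t * x (i-1) t) + ∫ t in (0:ℝ)..T, u i t * (1 - x (i+1) t))
      < (∫ t in (0:ℝ)..T, u (i-1) t * x (i-1) t) * ∫ t in (0:ℝ)..T, u i t * (1 - x (i+1) t) := by
    intro i h1 h2
    exact site_var hT (fun t => u (i-1) t * x (i-1) t) (fun t => u i t * (1 - x (i+1) t)) (x i)
      ((hu_cont (i-1) (by omega)).mul (hxc (i-1) (by omega)))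
      ((hu_cont i h2).mul (continuous_const.sub (hxc (i+1) (by omega))))
      (hxdiff i h1 h2)
      (fun t => mul_pos (hu_pos (i-1) (by omega) t) (hxpos (i-1) (by omega) t))
      (fun t => mul_pos (hu_pos i h2 t) (by linarith [hxlt (i+1) (by omega) (by omega) t]))
      (hxper i h1 h2)
      (fun t => by rw [hode i h1 h2 t]; ring)
      (by intro c; by_contra hcc; push_neg at hcc; exact hnondeg i h1 h2 ⟨c, hcc⟩)
  -- flux identities
  have hflux : ∀ i, 1 ≤ i → i ≤ n →
      ∫ t in (0:ℝ)..T, u (i-1) t * x (i-1) t * (1 - x i t)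
        = ∫ t in (0:ℝ)..T, u i t * x i t * (1 - x (i+1) t) := by
    intro i h1 h2
    have key := site_flux (T := T) (fun t => u (i-1) t * x (i-1) t) (fun t => u i t * (1 - x (i+1) t)) (x i)
      ((hu_cont (i-1) (by omega)).mul (hxc (i-1) (by omega)))
      ((hu_cont i h2).mul (continuous_const.sub (hxc (i+1) (by omega))))
      (hxdiff i h1 h2)
      (by rw [← hxper i h1 h2 0, zero_add])
      (fun t => by rw [hode i h1 h2 t]; ring)
    exact key.trans (intervalIntegral.integral_congr fun t _ => by ring)
  -- flux chain down to site n
  have hJn : (∫ t in (0:ℝ)..T, u n t * x n t * (1 - x (n+1) t)) = ∫ t in (0:ℝ)..T, u n t * x n t :=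
    intervalIntegral.integral_congr fun t _ => by rw [hxtop t]; ring
  have hFlchain : ∀ i, i ≤ n →
      (∫ t in (0:ℝ)..T, u i t * x i t * (1 - x (i+1) t)) = ∫ t in (0:ℝ)..T, u n t * x n t := by
    intro i hi
    have h := chain_down (fun i => ∫ t in (0:ℝ)..T, u i t * x i t * (1 - x (i+1) t)) n
      (fun i h1 h2 => by
        rw [show i - 1 + 1 = i from by omega]
        exact hflux i h1 h2) i hi
    rw [h, hJn]
  -- equilibrium chain
  have hueq : ∀ i, 1 ≤ i → i ≤ n →
      (∫ t in (0:ℝ)..T, u (i-1) t) * e (i-1) * (1 - e i)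
        = (∫ t in (0:ℝ)..T, u i t) * e i * (1 - e (i+1)) := by
    intro i h1 h2
    have h := heq i h1 h2
    have h' : 1/T * ((∫ t in (0:ℝ)..T, u (i-1) t) * e (i-1) * (1 - e i))
        = 1/T * ((∫ t in (0:ℝ)..T, u i t) * e i * (1 - e (i+1))) := by linear_combination h
    exact mul_left_cancel₀ (one_div_ne_zero hT') h'
  have hFechain : ∀ i, i ≤ n →
      (∫ t in (0:ℝ)..T, u i t) * e i * (1 - e (i+1))
        = (∫ t in (0:ℝ)..T, u n t) * e n := by
    intro i hi
    have h := chain_down (fun i => (∫ t in (0:ℝ)..T, u i t) * e i * (1 - e (i+1))) n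
      (fun i h1 h2 => by
        rw [show i - 1 + 1 = i from by omega]
        exact hueq i h1 h2) i hi
    rw [h, hetop]; ring
  -- positivity helpers
  have hIu : ∀ i, i ≤ n → 0 < ∫ t in (0:ℝ)..T, u i t := fun i hi =>
    intervalIntegral_pos_of_pos_on ((hu_cont i hi).intervalIntegrable _ _)
      (fun t _ => hu_pos i hi t) hT
  have hApos : ∀ i, i ≤ n → 0 < ∫ t in (0:ℝ)..T, u i t * x i t := fun i hi =>
    intervalIntegral_pos_of_pos_on
      (((hu_cont i hi).mul (hxc i (by omega))).intervalIntegrable _ _)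
      (fun t _ => mul_pos (hu_pos i hi t) (hxpos i hi t)) hT
  have hBpos : ∀ i, i ≤ n → 0 < ∫ t in (0:ℝ)..T, u i t * (1 - x (i+1) t) := fun i hi =>
    intervalIntegral_pos_of_pos_on
      (((hu_cont i hi).mul (continuous_const.sub (hxc (i+1) (by omega)))).intervalIntegrable _ _)
      (fun t _ => mul_pos (hu_pos i hi t)
        (by linarith [hxlt (i+1) (by omega) (by omega) t])) hT
  have hepos : ∀ i, i ≤ n → 0 < e i := by
    intro i hi
    by_cases h0 : i = 0
    · subst h0; rw [he0]; norm_num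
    · exact (hemem i (by omega) hi).1
  -- contradiction setup
  by_contra hcon
  push_neg at hcon
  have hJle : (∫ t in (0:ℝ)..T, u n t) * e n ≤ ∫ t in (0:ℝ)..T, u n t * x n t := by
    have h1T : (0:ℝ) < 1/T := by positivity
    refine le_of_mul_le_mul_left ?_ h1T
    rw [← mul_assoc]
    exact hcon
  obtain ⟨m, hm⟩ := hodd
  subst hm
  -- key downward induction over the pairs
  have key : ∀ j, j ≤ m →
      (∫ t in (0:ℝ)..T, u (2*(m-j)) t) * e (2*(m-j))
        < ∫ t in (0:ℝ)..T, u (2*(m-j)) t * x (2*(m-j)) t := by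
    intro j
    induction j with
    | zero =>
      intro _
      simp only [Nat.sub_zero]
      have hs := hsite (2*m+1) (by omega) (by omega)
      rw [show 2*m+1-1 = 2*m from by omega] at hs
      rw [hFlchain (2*m) (by omega)] at hs
      have hBeq : (∫ t in (0:ℝ)..T, u (2*m+1) t * (1 - x (2*m+1+1) t))
          = ∫ t in (0:ℝ)..T, u (2*m+1) t :=
        intervalIntegral.integral_congr fun t _ => by rw [hxtop t]; ring
      rw [hBeq] at hs
      have f1 := hFechain (2*m) (by omega)
      exact cmp_step (hApos (2*m) (by omega)) (hIu (2*m+1) (by omega))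
        (mul_pos (hIu (2*m) (by omega)) (hepos (2*m) (by omega)))
        (hIu (2*m+1) (by omega))
        (mul_pos (hIu (2*m+1) (by omega)) (hepos (2*m+1) (by omega)))
        hJle le_rfl hs
        (by linear_combination (-(∫ t in (0:ℝ)..T, u (2*m+1) t)) * f1)
    | succ j ih =>
      intro hj1
      have IH := ih (by omega)
      set k := m - (j+1) with hk
      have hmj : m - j = k + 1 := by omega
      rw [hmj] at IH
      -- site 2k+1
      have hs := hsite (2*k+1) (by omega) (by omega)
      rw [show 2*k+1-1 = 2*k from by omega] at hs
      rw [show 2*k+1+1 = 2*(k+1) from by ring] at hs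
      rw [hFlchain (2*k) (by omega)] at hs
      obtain ⟨α, hαpos, hα⟩ := hprop (2*k+1) ⟨k, by ring⟩ (by omega)
      have hIi : IntervalIntegrable (fun t => u (2*(k+1)) t) volume 0 T :=
        (hu_cont (2*(k+1)) (by omega)).intervalIntegrable _ _
      have hIxi : IntervalIntegrable (fun t => u (2*(k+1)) t * x (2*(k+1)) t) volume 0 T :=
        ((hu_cont (2*(k+1)) (by omega)).mul (hxc (2*(k+1)) (by omega))).intervalIntegrable _ _
      have hBeq : (∫ t in (0:ℝ)..T, u (2*k+1) t * (1 - x (2*(k+1)) t))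
          = α * ((∫ t in (0:ℝ)..T, u (2*(k+1)) t)
              - ∫ t in (0:ℝ)..T, u (2*(k+1)) t * x (2*(k+1)) t) := by
        rw [← intervalIntegral.integral_sub hIi hIxi, ← intervalIntegral.integral_const_mul]
        refine intervalIntegral.integral_congr fun t _ => ?_
        rw [hα t]; ring
      have hIu1 : (∫ t in (0:ℝ)..T, u (2*k+1) t) = α * ∫ t in (0:ℝ)..T, u (2*(k+1)) t := by
        rw [← intervalIntegral.integral_const_mul]
        exact intervalIntegral.integral_congr fun t _ => hα t
      have f1 := hFechain (2*k) (by omega)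
      have f2 := hFechain (2*k+1) (by omega)
      rw [show 2*k+1+1 = 2*(k+1) from by ring] at f2
      -- comparison
      have hBle : (∫ t in (0:ℝ)..T, u (2*k+1) t * (1 - x (2*(k+1)) t))
          ≤ (∫ t in (0:ℝ)..T, u (2*k+1) t) * (1 - e (2*(k+1))) := by
        rw [hBeq, hIu1]
        nlinarith [mul_nonneg hαpos.le (sub_nonneg.mpr IH.le)]
      have hBhpos : 0 < (∫ t in (0:ℝ)..T, u (2*k+1) t) * (1 - e (2*(k+1))) :=
        mul_pos (hIu (2*k+1) (by omega))
          (by linarith [(hemem (2*(k+1)) (by omega) (by omega)).2])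
      have hB := hBpos (2*k+1) (by omega)
      rw [show 2*k+1+1 = 2*(k+1) from by ring] at hB
      have heqs : ((∫ t in (0:ℝ)..T, u (2*m+1) t) * e (2*m+1))
            * (((∫ t in (0:ℝ)..T, u (2*k) t) * e (2*k))
              + (∫ t in (0:ℝ)..T, u (2*k+1) t) * (1 - e (2*(k+1))))
          = ((∫ t in (0:ℝ)..T, u (2*k) t) * e (2*k))
            * ((∫ t in (0:ℝ)..T, u (2*k+1) t) * (1 - e (2*(k+1)))) := by
        linear_combination (-((∫ t in (0:ℝ)..T, u (2*k+1) t) * (1 - e (2*(k+1))))) * f1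
          + (-((∫ t in (0:ℝ)..T, u (2*k) t) * e (2*k))) * f2
      exact cmp_step (hApos (2*k) (by omega)) hB
        (mul_pos (hIu (2*k) (by omega)) (hepos (2*k) (by omega)))
        hBhpos
        (mul_pos (hIu (2*m+1) (by omega)) (hepos (2*m+1) (by omega)))
        hJle hBle hs heqs
  have final := key m le_rfl
  simp only [Nat.sub_self, Nat.mul_zero] at final
  rw [he0, mul_one] at final
  have h00 : (∫ t in (0:ℝ)..T, u 0 t * x 0 t) = ∫ t in (0:ℝ)..T, u 0 t :=
    intervalIntegral.integral_congr fun t _ => by rw [hx0 t, mul_one]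
  rw [h00] at final
  exact absurd final (lt_irrefl _)
end

section
/- Let f: ℝ → ℝ be continuously differentiable with f'(x) ≤ -c < 0 for all x (contraction). For any continuous T-periodic input u, every solution of ẋ = f(x) + u(t) converges to a unique T-periodic solution; moreover any two solutions x, y satisfy |x(t) - y(t)| ≤ e^{-ct}|x(0) - y(0)| for all t ≥ 0. -/
open MeasureTheory intervalIntegral Real Filter

open Set in
lemma aux_slope {f : ℝ → ℝ} {c : ℝ} (hf : Differentiable ℝ f)
    (hf' : ∀ x : ℝ, deriv f x ≤ -c) (x y : ℝ) :
    (f x - f y) * (x - y) ≤ -c * (x - y)^2 := by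
  rcases lt_trichotomy x y with h | h | h
  · obtain ⟨ξ, _, hξ⟩ := exists_deriv_eq_slope f h hf.continuous.continuousOn
      (fun z _ => hf.differentiableAt.differentiableWithinAt)
    have hxy : y - x > 0 := by linarith
    have : f y - f x = deriv f ξ * (y - x) := by
      field_simp at hξ; linarith [hξ]
    nlinarith [hf' ξ]
  · simp [h]
  · obtain ⟨ξ, _, hξ⟩ := exists_deriv_eq_slope f h hf.continuous.continuousOn
      (fun z _ => hf.differentiableAt.differentiableWithinAt)
    have hxy : x - y > 0 := by linarith
    have : f x - f y = deriv f ξ * (x - y) := by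
      field_simp at hξ; linarith [hξ]
    nlinarith [hf' ξ]

open Set in
lemma aux_anti {f : ℝ → ℝ} {c : ℝ} (hf : Differentiable ℝ f)
    (hf' : ∀ x : ℝ, deriv f x ≤ -c) {x y : ℝ} (h : x < y) :
    f y ≤ f x - c * (y - x) := by
  have := aux_slope hf hf' y x
  nlinarith

open Set in
lemma aux_contract {f u : ℝ → ℝ} {c : ℝ} (hc : 0 < c) (hf : Differentiable ℝ f)
    (hf' : ∀ x : ℝ, deriv f x ≤ -c)
    {x y : ℝ → ℝ} (hx : Differentiable ℝ x) (hy : Differentiable ℝ y)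
    {t₀ t₁ : ℝ} (ht : t₀ ≤ t₁)
    (hx' : ∀ s ∈ Icc t₀ t₁, deriv x s = f (x s) + u s)
    (hy' : ∀ s ∈ Icc t₀ t₁, deriv y s = f (y s) + u s) :
    |x t₁ - y t₁| ≤ Real.exp (-c * (t₁ - t₀)) * |x t₀ - y t₀| := by
  set w : ℝ → ℝ := fun s => x s - y s with hw_def
  set h : ℝ → ℝ := fun s => Real.exp (2*c*(s - t₀)) * (w s)^2 with hh_def
  have hw : ∀ s, HasDerivAt w (deriv x s - deriv y s) s := fun s =>
    ((hx s).hasDerivAt).sub ((hy s).hasDerivAt)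
  have he : ∀ s : ℝ, HasDerivAt (fun s : ℝ => Real.exp (2*c*(s - t₀)))
      (Real.exp (2*c*(s - t₀)) * (2*c)) s := by
    intro s
    have h1 : HasDerivAt (fun s : ℝ => 2*c*(s - t₀)) (2*c) s := by
      simpa using ((hasDerivAt_id s).sub_const t₀).const_mul (2*c)
    exact h1.exp
  have hh : ∀ s, HasDerivAt h
      (Real.exp (2*c*(s - t₀)) * (2*c) * (w s)^2
        + Real.exp (2*c*(s - t₀)) * (2 * w s * (deriv x s - deriv y s))) s := by
    intro s
    simp only [hh_def]
    refine ((he s).mul ((hw s).pow 2)).congr_deriv ?_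
    simp only [Pi.pow_apply]
    ring
  have hanti : AntitoneOn h (Icc t₀ t₁) := by
    apply antitoneOn_of_deriv_nonpos (convex_Icc t₀ t₁)
    · exact fun s _ => ((hh s).continuousAt).continuousWithinAt
    · exact fun s _ => ((hh s).differentiableAt).differentiableWithinAt
    · intro s hs
      rw [interior_Icc] at hs
      rw [(hh s).deriv]
      have hsI : s ∈ Icc t₀ t₁ := Ioo_subset_Icc_self hs
      have hd : deriv x s - deriv y s = f (x s) - f (y s) := by
        rw [hx' s hsI, hy' s hsI]; ring
      rw [hd]
      have hslope := aux_slope hf hf' (x s) (y s)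
      have hepos : (0:ℝ) < Real.exp (2*c*(s - t₀)) := Real.exp_pos _
      have : w s * (f (x s) - f (y s)) ≤ -c * (w s)^2 := by
        have : (f (x s) - f (y s)) * (x s - y s) ≤ -c * (x s - y s)^2 := hslope
        simp only [hw_def]; nlinarith
      nlinarith
  have hkey : Real.exp (2*c*(t₁ - t₀)) * (w t₁)^2 ≤ (w t₀)^2 := by
    have := hanti (left_mem_Icc.2 ht) (right_mem_Icc.2 ht) ht
    simpa [hh_def] using this
  have hsq : (w t₁)^2 ≤ (Real.exp (-c*(t₁ - t₀)) * |w t₀|)^2 := by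
    have h1 : (Real.exp (-c*(t₁ - t₀)) * |w t₀|)^2
        = Real.exp (-(2*c*(t₁ - t₀))) * (w t₀)^2 := by
      rw [mul_pow, sq_abs, ← Real.exp_nat_mul]
      ring_nf
    rw [h1]
    have h2 : Real.exp (-(2*c*(t₁ - t₀))) * Real.exp (2*c*(t₁ - t₀)) = 1 := by
      rw [← Real.exp_add]; ring_nf; exact Real.exp_zero
    nlinarith [Real.exp_pos (-(2*c*(t₁ - t₀))), hkey]
  have := Real.sqrt_le_sqrt hsq
  rwa [Real.sqrt_sq_eq_abs, Real.sqrt_sq (by positivity)] at this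

open Set in
lemma aux_global {v : ℝ → ℝ → ℝ} {L : NNReal} {C : ℝ}
    (hL : ∀ t, LipschitzWith L (v t))
    (hC : ∀ t x, |v t x| ≤ C)
    (hvc : ∀ x, Continuous fun t => v t x)
    (p : ℝ) :
    ∃ α : ℝ → ℝ, α 0 = p ∧ ∀ t, HasDerivAt α (v t (α t)) t := by
  have hC0 : 0 ≤ C := le_trans (abs_nonneg _) (hC 0 0)
  have pl : ∀ n : ℕ, IsPicardLindelof v (tmin := -((n:ℝ)+1)) (tmax := (n:ℝ)+1)
      ⟨0, by constructor <;> linarith⟩ p (Real.toNNReal ((C+1)*(n+1))) 0 (Real.toNNReal C) L := by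
    intro n
    have hn1 : (0:ℝ) ≤ (n:ℝ) + 1 := by positivity
    exact
      { lipschitzOnWith := fun t _ => (hL t).lipschitzOnWith
        continuousOn := fun x _ => (hvc x).continuousOn
        norm_le := fun t _ x _ => by
          rw [Real.norm_eq_abs, Real.coe_toNNReal _ hC0]; exact hC t x
        mul_max_le := by
          have : max ((n:ℝ)+1 - 0) (0 - (-((n:ℝ)+1))) = (n:ℝ)+1 := by
            rw [max_eq_left] <;> linarith
          show (Real.toNNReal C : ℝ) * max ((n:ℝ)+1 - 0) (0 - (-((n:ℝ)+1)))
            ≤ (Real.toNNReal ((C+1)*(n+1)) : ℝ) - ((0 : NNReal) : ℝ)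
          rw [this, NNReal.coe_zero, sub_zero, Real.coe_toNNReal _ hC0, Real.coe_toNNReal _ (by positivity)]
          nlinarith }
  choose F hF0' hF using fun n => (pl n).exists_eq_forall_mem_Icc_hasDerivWithinAt₀
  have hF0 : ∀ n, F n 0 = p := hF0'
  have hFd : ∀ n : ℕ, ∀ t : ℝ, |t| < (n:ℝ)+1 → HasDerivAt (F n) (v t (F n t)) t := by
    intro n t ht
    rw [abs_lt] at ht
    exact (hF n t ⟨ht.1.le, ht.2.le⟩).hasDerivAt
      (Icc_mem_nhds (by linarith [ht.1]) (by linarith [ht.2]))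
  have hv' : ∀ t : ℝ, LipschitzOnWith L (v t) ((fun _ : ℝ => (univ : Set ℝ)) t) :=
    fun t => (hL t).lipschitzOnWith
  have heq : ∀ m n : ℕ, ∀ t : ℝ, |t| < (m:ℝ)+1 → |t| < (n:ℝ)+1 → F m t = F n t := by
    intro m n t hm hn
    set r : ℝ := min ((m:ℝ)+1) ((n:ℝ)+1) with hr
    have hr0 : 0 < r := by
      apply lt_min <;> positivity
    have htr : t ∈ Ioo (-r) r := by
      rw [mem_Ioo, ← abs_lt]
      exact lt_min hm hn
    have h0r : (0:ℝ) ∈ Ioo (-r) r := by constructor <;> linarith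
    refine ODE_solution_unique_of_mem_Ioo (fun s _ => hv' s) h0r ?_ ?_ ?_ htr
    · intro s hs
      rw [mem_Ioo, ← abs_lt] at hs
      exact ⟨hFd m s (lt_of_lt_of_le hs (min_le_left _ _)), mem_univ _⟩
    · intro s hs
      rw [mem_Ioo, ← abs_lt] at hs
      exact ⟨hFd n s (lt_of_lt_of_le hs (min_le_right _ _)), mem_univ _⟩
    · rw [hF0 m, hF0 n]
  refine ⟨fun t => F ⌊|t|⌋₊ t, ?_, ?_⟩
  · simpa using hF0 0
  · intro t
    set n : ℕ := ⌊|t|⌋₊ + 1 with hn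
    have htn : |t| < (n:ℝ) := by
      push_cast [hn]
      exact Nat.lt_floor_add_one _
    have hev : (fun t => F ⌊|t|⌋₊ t) =ᶠ[nhds t] F n := by
      filter_upwards [isOpen_Ioo.mem_nhds (show t ∈ Ioo (-(n:ℝ)) (n:ℝ) by
        rw [mem_Ioo, ← abs_lt]; exact htn)] with s hs
      rw [mem_Ioo, ← abs_lt] at hs
      exact heq _ _ s (Nat.lt_floor_add_one _) (by linarith)
    have hval : (fun t => F ⌊|t|⌋₊ t) t = F n t :=
      heq _ _ t (Nat.lt_floor_add_one _) (by linarith)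
    have hd := hFd n t (by linarith)
    rw [show v t (F ⌊|t|⌋₊ t) = v t (F n t) from congrArg _ hval]
    exact hd.congr_of_eventuallyEq hev

open Set in
lemma aux_unique {v : ℝ → ℝ → ℝ} {L : NNReal} (hL : ∀ t, LipschitzWith L (v t))
    {x y : ℝ → ℝ} (hx : ∀ t, HasDerivAt x (v t (x t)) t)
    (hy : ∀ t, HasDerivAt y (v t (y t)) t)
    (h0 : x 0 = y 0) : ∀ t, x t = y t := by
  intro t
  set r : ℝ := |t| + 1 with hr
  have hr0 : 0 < r := by positivity
  have hv' : ∀ s : ℝ, LipschitzOnWith L (v s) ((fun _ : ℝ => (univ : Set ℝ)) s) :=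
    fun s => (hL s).lipschitzOnWith
  have htr : t ∈ Ioo (-r) r := by
    rw [mem_Ioo, ← abs_lt]
    simp [hr]
  have h0r : (0:ℝ) ∈ Ioo (-r) r := by
    constructor <;> [linarith; linarith]
  exact ODE_solution_unique_of_mem_Ioo (fun s _ => hv' s) h0r
    (fun s _ => ⟨hx s, mem_univ _⟩) (fun s _ => ⟨hy s, mem_univ _⟩) h0 htr

open Set in
lemma aux_invariant {g u : ℝ → ℝ} {a b : ℝ}
    (hup : ∀ t, g b + u t < 0) (hlo : ∀ t, 0 < g a + u t)
    (hgb : ∀ z : ℝ, b ≤ z → g z = g b) (hga : ∀ z : ℝ, z ≤ a → g z = g a)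
    {x : ℝ → ℝ} (hx : ∀ t, HasDerivAt x (g (x t) + u t) t)
    {t₀ : ℝ} (h0 : x t₀ ∈ Icc a b) : ∀ t, t₀ ≤ t → x t ∈ Icc a b := by
  have hxc : Continuous x := by
    apply continuous_iff_continuousAt.2
    exact fun t => (hx t).continuousAt
  intro t htt
  constructor
  · by_contra hcon
    push_neg at hcon
    set S : Set ℝ := Icc t₀ t ∩ x ⁻¹' (Ici a) with hS
    have hScl : IsCompact S := isCompact_Icc.inter_right (isClosed_Ici.preimage hxc)
    have hne : S.Nonempty := ⟨t₀, ⟨le_rfl, htt⟩, h0.1⟩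
    set s : ℝ := sSup S with hs_def
    have hsS : s ∈ S := hScl.sSup_mem hne
    have hst : s < t := by
      rcases lt_or_eq_of_le hsS.1.2 with h | h
      · exact h
      · exfalso; rw [h] at hsS; exact absurd hsS.2 (not_le.2 hcon)
    have hmem : ∀ τ, τ ∈ Ioc s t → x τ < a := by
      intro τ hτ
      by_contra hc
      push_neg at hc
      have : τ ∈ S := ⟨⟨le_trans hsS.1.1 hτ.1.le, hτ.2⟩, hc⟩
      exact absurd (le_csSup hScl.bddAbove this) (not_le.2 hτ.1)
    have hmono : StrictMonoOn x (Icc s t) := by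
      apply strictMonoOn_of_deriv_pos (convex_Icc s t)
        (fun τ _ => hxc.continuousWithinAt)
      intro τ hτ
      rw [interior_Icc] at hτ
      rw [(hx τ).deriv, hga (x τ) (hmem τ ⟨hτ.1, hτ.2.le⟩).le]
      exact hlo τ
    have := hmono ⟨le_rfl, hst.le⟩ ⟨hst.le, le_rfl⟩ hst
    have hxa : a ≤ x s := hsS.2
    have hxt : x t < a := hmem t ⟨hst, le_rfl⟩
    linarith
  · by_contra hcon
    push_neg at hcon
    set S : Set ℝ := Icc t₀ t ∩ x ⁻¹' (Iic b) with hS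
    have hScl : IsCompact S := isCompact_Icc.inter_right (isClosed_Iic.preimage hxc)
    have hne : S.Nonempty := ⟨t₀, ⟨le_rfl, htt⟩, h0.2⟩
    set s : ℝ := sSup S with hs_def
    have hsS : s ∈ S := hScl.sSup_mem hne
    have hst : s < t := by
      rcases lt_or_eq_of_le hsS.1.2 with h | h
      · exact h
      · exfalso; rw [h] at hsS; exact absurd hsS.2 (not_le.2 hcon)
    have hmem : ∀ τ, τ ∈ Ioc s t → b < x τ := by
      intro τ hτ
      by_contra hc
      push_neg at hc
      have : τ ∈ S := ⟨⟨le_trans hsS.1.1 hτ.1.le, hτ.2⟩, hc⟩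
      exact absurd (le_csSup hScl.bddAbove this) (not_le.2 hτ.1)
    have hmono : StrictAntiOn x (Icc s t) := by
      apply strictAntiOn_of_deriv_neg (convex_Icc s t)
        (fun τ _ => hxc.continuousWithinAt)
      intro τ hτ
      rw [interior_Icc] at hτ
      rw [(hx τ).deriv, hgb (x τ) (hmem τ ⟨hτ.1, hτ.2.le⟩).le]
      exact hup τ
    have := hmono ⟨le_rfl, hst.le⟩ ⟨hst.le, le_rfl⟩ hst
    have hxb : x s ≤ b := hsS.2
    have hxt : b < x t := hmem t ⟨hst, le_rfl⟩
    linarith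
open Set

theorem scalar_contraction_entrainment
    (f : ℝ → ℝ) (c : ℝ) (hc : 0 < c)
    (hf : ContDiff ℝ 1 f) (hf' : ∀ x : ℝ, deriv f x ≤ -c)
    (T : ℝ) (hT : 0 < T) (u : ℝ → ℝ)
    (hu : Continuous u) (huper : ∀ t, u (t + T) = u t) :
    (∀ x y : ℝ → ℝ,
        Differentiable ℝ x → (∀ t, deriv x t = f (x t) + u t) →
        Differentiable ℝ y → (∀ t, deriv y t = f (y t) + u t) →
        ∀ t, 0 ≤ t → |x t - y t| ≤ Real.exp (-c * t) * |x 0 - y 0|)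
    ∧ ∃ γ : ℝ → ℝ,
        Differentiable ℝ γ
        ∧ (∀ t, deriv γ t = f (γ t) + u t)
        ∧ (∀ t, γ (t + T) = γ t)
        ∧ (∀ γ' : ℝ → ℝ,
            Differentiable ℝ γ' → (∀ t, deriv γ' t = f (γ' t) + u t) →
            (∀ t, γ' (t + T) = γ' t) → γ' = γ)
        ∧ (∀ x : ℝ → ℝ,
            Differentiable ℝ x → (∀ t, deriv x t = f (x t) + u t) →
            Filter.Tendsto (fun t => x t - γ t) Filter.atTop (nhds 0)) := by
  have hfd : Differentiable ℝ f := hf.differentiable one_ne_zero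
  have part1 : ∀ x y : ℝ → ℝ,
      Differentiable ℝ x → (∀ t, deriv x t = f (x t) + u t) →
      Differentiable ℝ y → (∀ t, deriv y t = f (y t) + u t) →
      ∀ t, 0 ≤ t → |x t - y t| ≤ Real.exp (-c * t) * |x 0 - y 0| := by
    intro x y hx hx' hy hy' t ht
    have := aux_contract (u := u) hc hfd hf' hx hy ht
      (fun s _ => hx' s) (fun s _ => hy' s)
    simpa using this
  refine ⟨part1, ?_⟩
  -- bound on u
  obtain ⟨U₀, hU₀⟩ := isCompact_Icc.exists_bound_of_continuousOn
    (s := Icc (0:ℝ) T) hu.continuousOn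
  set U := max U₀ 0 with hU_def
  have hU : ∀ t, |u t| ≤ U := by
    intro t
    obtain ⟨y, hy, hyeq⟩ := Function.Periodic.exists_mem_Ico₀ huper hT t
    rw [hyeq]
    exact le_trans (by simpa [Real.norm_eq_abs] using hU₀ y ⟨hy.1, hy.2.le⟩)
      (le_max_left _ _)
  have hU0 : 0 ≤ U := le_max_right _ _
  -- the trapping interval [a, b]
  set b := max 1 ((f 0 + U + 1)/c) with hb_def
  set a := min (-1) ((f 0 - U - 1)/c) with ha_def
  have hb1 : (1:ℝ) ≤ b := le_max_left _ _
  have ha1 : a ≤ -1 := min_le_left _ _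
  have hab : a ≤ b := by linarith
  have hfb : f b ≤ -(U+1) := by
    have h1 : (f 0 + U + 1)/c ≤ b := le_max_right _ _
    have h2 : f 0 + U + 1 ≤ b * c := (div_le_iff₀ hc).mp h1
    have h3 : f b ≤ f 0 - c * (b - 0) := aux_anti hfd hf' (by linarith : (0:ℝ) < b)
    nlinarith
  have hfa : U+1 ≤ f a := by
    have h1 : a ≤ (f 0 - U - 1)/c := min_le_right _ _
    have h2 : a * c ≤ f 0 - U - 1 := (le_div_iff₀ hc).mp h1
    have h3 : f 0 ≤ f a - c * (0 - a) := aux_anti hfd hf' (by linarith : a < (0:ℝ))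
    nlinarith
  -- projection onto [a, b] and truncated vector field
  set P : ℝ → ℝ := fun z => min b (max a z) with hP_def
  have hPmem : ∀ z, P z ∈ Icc a b :=
    fun z => ⟨le_min hab (le_max_left a z), min_le_left _ _⟩
  have hPid : ∀ z ∈ Icc a b, P z = z := by
    intro z hz
    simp only [hP_def]
    rw [max_eq_right hz.1, min_eq_right hz.2]
  have hPb : ∀ z, b ≤ z → P z = b := by
    intro z hz
    simp only [hP_def]
    rw [min_eq_left (le_trans hz (le_max_right a z))]
  have hPa : ∀ z, z ≤ a → P z = a := by
    intro z hz
    simp only [hP_def]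
    rw [max_eq_left hz, min_eq_right hab]
  have hPlip : ∀ z w, |P z - P w| ≤ |z - w| := by
    intro z w
    simp only [hP_def]
    refine le_trans (abs_min_sub_min_le_max _ _ _ _) ?_
    apply max_le
    · simp [abs_nonneg]
    · refine le_trans (abs_max_sub_max_le_max _ _ _ _) ?_
      apply max_le
      · simp [abs_nonneg]
      · exact le_rfl
  set g : ℝ → ℝ := fun z => f (P z) with hg_def
  -- Lipschitz bound for f on [a,b]
  obtain ⟨K, hK⟩ := isCompact_Icc.exists_bound_of_continuousOn
    (s := Icc a b) (hf.continuous_deriv le_rfl).continuousOn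
  have hK0 : 0 ≤ K := le_trans (norm_nonneg _) (hK a ⟨le_rfl, hab⟩)
  have hfK : ∀ p q : ℝ, p ∈ Icc a b → q ∈ Icc a b → |f p - f q| ≤ K * |p - q| := by
    intro p q hp hq
    rcases lt_trichotomy p q with h | h | h
    · obtain ⟨ξ, hξm, hξ⟩ := exists_deriv_eq_slope f h hfd.continuous.continuousOn
        (fun z _ => hfd.differentiableAt.differentiableWithinAt)
      have hξI : ξ ∈ Icc a b := ⟨le_trans hp.1 hξm.1.le, le_trans hξm.2.le hq.2⟩
      have hne : q - p ≠ 0 := sub_ne_zero.2 h.ne'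
      have heq : f q - f p = deriv f ξ * (q - p) := by
        rw [hξ, div_mul_cancel₀ _ hne]
      have : |f p - f q| = |deriv f ξ| * |q - p| := by
        rw [← abs_mul, ← heq, abs_sub_comm]
      rw [this, abs_sub_comm p q]
      exact mul_le_mul_of_nonneg_right
        (by simpa [Real.norm_eq_abs] using hK ξ hξI) (abs_nonneg _)
    · simp [h, hK0, abs_nonneg, mul_nonneg]
    · obtain ⟨ξ, hξm, hξ⟩ := exists_deriv_eq_slope f h hfd.continuous.continuousOn
        (fun z _ => hfd.differentiableAt.differentiableWithinAt)
      have hξI : ξ ∈ Icc a b := ⟨le_trans hq.1 hξm.1.le, le_trans hξm.2.le hp.2⟩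
      have hne : p - q ≠ 0 := sub_ne_zero.2 h.ne'
      have heq : f p - f q = deriv f ξ * (p - q) := by
        rw [hξ, div_mul_cancel₀ _ hne]
      have : |f p - f q| = |deriv f ξ| * |p - q| := by
        rw [heq, abs_mul]
      rw [this]
      exact mul_le_mul_of_nonneg_right
        (by simpa [Real.norm_eq_abs] using hK ξ hξI) (abs_nonneg _)
  have hglip : ∀ z w, |g z - g w| ≤ K * |z - w| := by
    intro z w
    refine le_trans (hfK _ _ (hPmem z) (hPmem w)) ?_
    exact mul_le_mul_of_nonneg_left (hPlip z w) hK0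
  set v : ℝ → ℝ → ℝ := fun t z => g z + u t with hv_def
  set L : NNReal := Real.toNNReal K with hLdef
  have hL : ∀ t, LipschitzWith L (v t) := by
    intro t
    apply LipschitzWith.of_dist_le_mul
    intro z w
    rw [Real.dist_eq, Real.dist_eq]
    have : v t z - v t w = g z - g w := by simp [hv_def]
    rw [this]
    refine le_trans (hglip z w) ?_
    apply mul_le_mul_of_nonneg_right _ (abs_nonneg _)
    rw [hLdef, Real.coe_toNNReal']
    exact le_max_left _ _
  obtain ⟨M, hM⟩ := isCompact_Icc.exists_bound_of_continuousOn
    (s := Icc a b) hfd.continuous.continuousOn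
  have hCv : ∀ t z, |v t z| ≤ M + U := by
    intro t z
    refine le_trans (abs_add_le _ _) (add_le_add ?_ (hU t))
    simpa [Real.norm_eq_abs] using hM _ (hPmem z)
  have hvc : ∀ z, Continuous fun t => v t z := fun z => continuous_const.add hu
  choose Φ hΦ0 hΦd using fun p : ℝ => aux_global hL hCv hvc p
  have hΦdiff : ∀ p, Differentiable ℝ (Φ p) := fun p t => (hΦd p t).differentiableAt
  -- invariance of [a,b]
  have hgb_eq : ∀ z : ℝ, b ≤ z → g z = g b := by
    intro z hz; simp only [hg_def]; rw [hPb z hz, hPb b le_rfl]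
  have hga_eq : ∀ z : ℝ, z ≤ a → g z = g a := by
    intro z hz; simp only [hg_def]; rw [hPa z hz, hPa a le_rfl]
  have hgbv : g b = f b := by simp only [hg_def]; rw [hPid b ⟨hab, le_rfl⟩]
  have hgav : g a = f a := by simp only [hg_def]; rw [hPid a ⟨le_rfl, hab⟩]
  have hup : ∀ t, g b + u t < 0 := by
    intro t
    have := (abs_le.mp (hU t)).2
    rw [hgbv]; linarith
  have hlo : ∀ t, 0 < g a + u t := by
    intro t
    have := (abs_le.mp (hU t)).1
    rw [hgav]; linarith
  have hinv : ∀ p ∈ Icc a b, ∀ t, 0 ≤ t → Φ p t ∈ Icc a b := by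
    intro p hp
    have hx : ∀ t, HasDerivAt (Φ p) (g (Φ p t) + u t) t := hΦd p
    exact aux_invariant hup hlo hgb_eq hga_eq hx (by rw [hΦ0]; exact hp)
  have hΦode : ∀ p ∈ Icc a b, ∀ s, 0 ≤ s → deriv (Φ p) s = f (Φ p s) + u s := by
    intro p hp s hs
    rw [(hΦd p s).deriv]
    simp only [hv_def, hg_def]
    rw [hPid _ (hinv p hp s hs)]
  -- Poincaré map
  have hQmem : ∀ p ∈ Icc a b, Φ p T ∈ Icc a b := fun p hp => hinv p hp T hT.le
  have hQlip : ∀ p q : ℝ, p ∈ Icc a b → q ∈ Icc a b →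
      |Φ p T - Φ q T| ≤ Real.exp (-c*T) * |p - q| := by
    intro p q hp hq
    have := aux_contract (u := u) hc hfd hf' (hΦdiff p) (hΦdiff q) hT.le (t₀ := 0)
      (fun s hs => hΦode p hp s hs.1) (fun s hs => hΦode q hq s hs.1)
    simpa [hΦ0] using this
  have hQcont : ContinuousOn (fun p => Φ p T - p) (Icc a b) := by
    have hQl : LipschitzOnWith (Real.toNNReal (Real.exp (-c*T)))
        (fun p => Φ p T) (Icc a b) := by
      apply LipschitzOnWith.of_dist_le_mul
      intro z hz w hw
      rw [Real.dist_eq, Real.dist_eq]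
      refine le_trans (hQlip z w hz hw) ?_
      apply mul_le_mul_of_nonneg_right _ (abs_nonneg _)
      rw [Real.coe_toNNReal _ (Real.exp_pos _).le]
    exact hQl.continuousOn.sub continuousOn_id
  obtain ⟨p, hpmem, hpfix0⟩ : ∃ p ∈ Icc a b, Φ p T - p = 0 := by
    have h0mem : (0:ℝ) ∈ Icc (Φ b T - b) (Φ a T - a) :=
      ⟨by linarith [(hQmem b ⟨hab, le_rfl⟩).2], by linarith [(hQmem a ⟨le_rfl, hab⟩).1]⟩
    obtain ⟨p, hp, hp0⟩ := intermediate_value_Icc' hab hQcont h0mem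
    exact ⟨p, hp, hp0⟩
  have hpfix : Φ p T = p := by linarith [hpfix0]
  set γ : ℝ → ℝ := Φ p with hγ_def
  have hγdiff : Differentiable ℝ γ := hΦdiff p
  -- periodicity
  have hper : ∀ t, γ (t+T) = γ t := by
    have hshift : ∀ t, HasDerivAt (fun s => γ (s + T)) (v t (γ (t + T))) t := by
      intro t
      have h1 := hΦd p (t+T)
      have h2 : HasDerivAt (fun s : ℝ => s + T) 1 t := (hasDerivAt_id t).add_const T
      have h3 := HasDerivAt.comp t h1 h2
      simp only [Function.comp, mul_one] at h3
      have h4 : v (t+T) (γ (t+T)) = v t (γ (t+T)) := by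
        simp only [hv_def]; rw [huper t]
      rw [h4] at h3
      exact h3
    have h0 : (fun s => γ (s + T)) 0 = γ 0 := by
      show γ (0 + T) = γ 0
      rw [zero_add, hpfix, hγ_def, hΦ0]
    exact aux_unique hL hshift (hΦd p) h0
  have hpern : ∀ t, ∀ n : ℕ, γ (t + n*T) = γ t := by
    intro t n
    induction n with
    | zero => simp
    | succ n ih =>
      push_cast
      rw [show t + ((n:ℝ)+1)*T = (t + (n:ℝ)*T) + T from by ring, hper]
      exact_mod_cast ih
  have hmemall : ∀ t, γ t ∈ Icc a b := by
    intro t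
    set n : ℕ := ⌈(-t)/T⌉₊ with hn
    have h1 : (-t)/T ≤ (n:ℝ) := Nat.le_ceil _
    have h2 : 0 ≤ t + n*T := by
      rw [div_le_iff₀ hT] at h1; linarith
    have := hinv p hpmem (t + n*T) h2
    rw [← hγ_def] at this
    rwa [hpern t n] at this
  have hode : ∀ t, deriv γ t = f (γ t) + u t := by
    intro t
    rw [hγ_def, (hΦd p t).deriv]
    simp only [hv_def, hg_def]
    rw [hPid _ (hmemall t)]
  refine ⟨γ, hγdiff, hode, hper, ?_, ?_⟩
  · -- uniqueness of the periodic solution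
    intro γ' hd' hode' hper'
    funext t
    have hback : γ' (t - T) = γ' t := by
      have := (hper' (t - T)).symm; rwa [sub_add_cancel] at this
    have hbackγ : γ (t - T) = γ t := by
      have := (hper (t - T)).symm; rwa [sub_add_cancel] at this
    have hcon := aux_contract (u := u) hc hfd hf' hd' hγdiff
      (show t - T ≤ t by linarith) (fun s _ => hode' s) (fun s _ => hode s)
    rw [hback, hbackγ] at hcon
    have hTT : -c * (t - (t - T)) = -c * T := by ring
    rw [hTT] at hcon
    have hlt : Real.exp (-c*T) < 1 := by
      rw [Real.exp_lt_one_iff]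
      nlinarith
    have habs : |γ' t - γ t| = 0 := by
      nlinarith [abs_nonneg (γ' t - γ t), Real.exp_pos (-c*T)]
    have := abs_eq_zero.mp habs
    linarith
  · -- convergence
    intro x hxd hxode
    have hb' := fun t (ht : 0 ≤ t) => part1 x γ hxd hxode hγdiff hode t ht
    have htend : Tendsto (fun t => Real.exp (-c*t) * |x 0 - γ 0|) atTop (nhds 0) := by
      have h1 : Tendsto (fun t : ℝ => c*t) atTop atTop :=
        Tendsto.const_mul_atTop hc tendsto_id
      have h2 : Tendsto (fun t : ℝ => -c*t) atTop atBot := by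
        have := tendsto_neg_atTop_atBot.comp h1
        simpa [Function.comp_def, neg_mul] using this
      have h3 := Real.tendsto_exp_atBot.comp h2
      have h4 := h3.mul_const |x 0 - γ 0|
      simpa [Function.comp_def] using h4
    apply squeeze_zero_norm' _ htend
    filter_upwards [eventually_ge_atTop (0:ℝ)] with t ht
    simpa [Real.norm_eq_abs] using hb' t ht
end

section
/- Consider the 2-site RFM ẋ₁ = u₀(1-x₁) - u₁x₁(1-x₂), ẋ₂ = u₁x₁(1-x₂) - u₂x₂ with continuous positive T-periodic rates where u₁ and u₂ are constant: u₁(t) ≡ ū₁, u₂(t) ≡ ū₂. Let x be the T-periodic solution in (0,1)², e the averaged equilibrium, and zᵢ = xᵢ - eᵢ. Then (1/T)∫₀ᵀ z₂ dt ≤ 0, and there is no gain of entrainment: R_P ≤ R_C. -/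
open MeasureTheory intervalIntegral Real Filter

set_option maxHeartbeats 1000000 in
theorem rfm2_constant_internal_no_goe
    (T : ℝ) (hT : 0 < T)
    (u0 : ℝ → ℝ) (c1 c2 : ℝ) (hc1 : 0 < c1) (hc2 : 0 < c2)
    (hu0c : Continuous u0) (hu0p : ∀ t, 0 < u0 t) (hu0per : ∀ t, u0 (t + T) = u0 t)
    (x1 x2 : ℝ → ℝ)
    (hx1d : Differentiable ℝ x1) (hx2d : Differentiable ℝ x2)
    (hx1per : ∀ t, x1 (t + T) = x1 t) (hx2per : ∀ t, x2 (t + T) = x2 t)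
    (hx1mem : ∀ t, x1 t ∈ Set.Ioo (0:ℝ) 1) (hx2mem : ∀ t, x2 t ∈ Set.Ioo (0:ℝ) 1)
    (hode1 : ∀ t, deriv x1 t = u0 t * (1 - x1 t) - c1 * x1 t * (1 - x2 t))
    (hode2 : ∀ t, deriv x2 t = c1 * x1 t * (1 - x2 t) - c2 * x2 t)
    (e1 e2 : ℝ) (he1 : e1 ∈ Set.Ioo (0:ℝ) 1) (he2 : e2 ∈ Set.Ioo (0:ℝ) 1)
    (heq1 : (1/T * ∫ t in (0:ℝ)..T, u0 t) * (1 - e1) = c1 * e1 * (1 - e2))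
    (heq2 : c1 * e1 * (1 - e2) = c2 * e2) :
    (1/T * ∫ t in (0:ℝ)..T, (x2 t - e2)) ≤ 0
    ∧ 1/T * ∫ t in (0:ℝ)..T, c2 * x2 t ≤ c2 * e2 := by
  obtain ⟨he1a, he1b⟩ := he1
  obtain ⟨he2a, he2b⟩ := he2
  have hx1c : Continuous x1 := hx1d.continuous
  have hx2c : Continuous x2 := hx2d.continuous
  have h1x1 : ∀ t, (0:ℝ) < 1 - x1 t := fun t => by have := (hx1mem t).2; linarith
  have h1x2 : ∀ t, (0:ℝ) < 1 - x2 t := fun t => by have := (hx2mem t).2; linarith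
  have hx1T : x1 T = x1 0 := by simpa using hx1per 0
  have hx2T : x2 T = x2 0 := by simpa using hx2per 0
  set I2 : ℝ := ∫ t in (0:ℝ)..T, x2 t with hI2def
  set J : ℝ := ∫ t in (0:ℝ)..T, x1 t * (1 - x2 t) with hJdef
  set P : ℝ := ∫ t in (0:ℝ)..T, u0 t with hPdef
  set Q : ℝ := ∫ t in (0:ℝ)..T, x1 t * (1 - x2 t) / (1 - x1 t) with hQdef
  have hJc : Continuous (fun t => x1 t * (1 - x2 t)) :=
    hx1c.mul (continuous_const.sub hx2c)
  have hQc : Continuous (fun t => x1 t * (1 - x2 t) / (1 - x1 t)) :=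
    hJc.div (continuous_const.sub hx1c) (fun t => (h1x1 t).ne')
  -- (i) integrate ode2 over a period
  have hi : c1 * J = c2 * I2 := by
    have hfc : Continuous (fun t => c1 * x1 t * (1 - x2 t) - c2 * x2 t) :=
      ((continuous_const.mul hx1c).mul (continuous_const.sub hx2c)).sub
        (continuous_const.mul hx2c)
    have hderiv : ∀ t ∈ Set.uIcc (0:ℝ) T,
        HasDerivAt x2 (c1 * x1 t * (1 - x2 t) - c2 * x2 t) t := by
      intro t _
      have h := (hx2d t).hasDerivAt
      rwa [hode2 t] at h
    have h0 := intervalIntegral.integral_eq_sub_of_hasDerivAt hderiv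
      (hfc.intervalIntegrable 0 T)
    rw [hx2T, sub_self] at h0
    have hsplit : (∫ t in (0:ℝ)..T, (c1 * x1 t * (1 - x2 t) - c2 * x2 t))
        = c1 * J - c2 * I2 := by
      rw [intervalIntegral.integral_sub (f := fun t => c1 * x1 t * (1 - x2 t))
        (g := fun t => c2 * x2 t)
        ((((continuous_const.mul hx1c).mul (continuous_const.sub hx2c) :
          Continuous (fun t => c1 * x1 t * (1 - x2 t)))).intervalIntegrable 0 T)
        ((continuous_const.mul hx2c : Continuous (fun t => c2 * x2 t)).intervalIntegrable 0 T)]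
      simp_rw [mul_assoc]
      rw [intervalIntegral.integral_const_mul, intervalIntegral.integral_const_mul]
    rw [hsplit] at h0
    linarith
  -- (ii) integrate d/dt (-log (1 - x1)) over a period
  have hii : P = c1 * Q := by
    have hgc : Continuous (fun t => u0 t - c1 * (x1 t * (1 - x2 t) / (1 - x1 t))) :=
      hu0c.sub (continuous_const.mul hQc)
    have hderiv : ∀ t ∈ Set.uIcc (0:ℝ) T,
        HasDerivAt (fun s => -Real.log (1 - x1 s))
          (u0 t - c1 * (x1 t * (1 - x2 t) / (1 - x1 t))) t := by
      intro t _
      have h1 : HasDerivAt (fun s => 1 - x1 s) (-(deriv x1 t)) t :=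
        ((hx1d t).hasDerivAt).const_sub 1
      have h2 : HasDerivAt (fun s => Real.log (1 - x1 s))
          (-(deriv x1 t) / (1 - x1 t)) t := h1.log (h1x1 t).ne'
      have h3 : HasDerivAt (fun s => -Real.log (1 - x1 s)) (-(-(deriv x1 t) / (1 - x1 t))) t :=
        h2.neg
      convert h3 using 1
      rw [hode1 t]
      have h4 := (h1x1 t).ne'
      field_simp
    have h0 := intervalIntegral.integral_eq_sub_of_hasDerivAt hderiv
      (hgc.intervalIntegrable 0 T)
    rw [hx1T, sub_self] at h0
    have hsplit : (∫ t in (0:ℝ)..T, (u0 t - c1 * (x1 t * (1 - x2 t) / (1 - x1 t))))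
        = P - c1 * Q := by
      rw [intervalIntegral.integral_sub (g := fun t => c1 * (x1 t * (1 - x2 t) / (1 - x1 t)))
        (hu0c.intervalIntegrable 0 T)
        ((continuous_const.mul hQc : Continuous
          (fun t => c1 * (x1 t * (1 - x2 t) / (1 - x1 t)))).intervalIntegrable 0 T),
        intervalIntegral.integral_const_mul]
    rw [hsplit] at h0
    linarith
  -- pointwise tangent-line inequality
  have hpt : ∀ t, (-e1^2 + e1^2 * x2 t + x1 t * (1 - x2 t))
      ≤ (1 - e1)^2 * (x1 t * (1 - x2 t) / (1 - x1 t)) := by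
    intro t
    have h := h1x1 t
    have h2 := h1x2 t
    have key : (1 - e1)^2 * (x1 t * (1 - x2 t) / (1 - x1 t))
        - (-e1^2 + e1^2 * x2 t + x1 t * (1 - x2 t))
        = (1 - x2 t) * (x1 t - e1)^2 / (1 - x1 t) := by
      field_simp
      ring
    have hpos : 0 ≤ (1 - x2 t) * (x1 t - e1)^2 / (1 - x1 t) := by positivity
    linarith
  -- integrate the inequality
  have hmono : -e1^2 * T + e1^2 * I2 + J ≤ (1 - e1)^2 * Q := by
    have hlc : Continuous (fun t => -e1^2 + e1^2 * x2 t + x1 t * (1 - x2 t)) :=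
      (continuous_const.add (continuous_const.mul hx2c)).add hJc
    have hm := intervalIntegral.integral_mono_on (μ := volume)
      (g := fun t => (1 - e1)^2 * (x1 t * (1 - x2 t) / (1 - x1 t))) hT.le
      (hlc.intervalIntegrable 0 T)
      ((continuous_const.mul hQc : Continuous
        (fun t => (1 - e1)^2 * (x1 t * (1 - x2 t) / (1 - x1 t)))).intervalIntegrable 0 T)
      (fun t _ => hpt t)
    have hlval : (∫ t in (0:ℝ)..T, (-e1^2 + e1^2 * x2 t + x1 t * (1 - x2 t)))
        = -e1^2 * T + e1^2 * I2 + J := by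
      rw [intervalIntegral.integral_add (f := fun t => -e1^2 + e1^2 * x2 t)
          ((continuous_const.add (continuous_const.mul hx2c) :
            Continuous (fun t => -e1^2 + e1^2 * x2 t)).intervalIntegrable 0 T)
          (hJc.intervalIntegrable 0 T),
        intervalIntegral.integral_add (g := fun t => e1^2 * x2 t)
          ((continuous_const : Continuous (fun _ : ℝ => -e1^2)).intervalIntegrable 0 T)
          ((continuous_const.mul hx2c : Continuous (fun t => e1^2 * x2 t)).intervalIntegrable 0 T),
        intervalIntegral.integral_const, intervalIntegral.integral_const_mul]
      simp [smul_eq_mul]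
      ring
    rw [hlval, intervalIntegral.integral_const_mul] at hm
    exact hm
  -- equilibrium relation for P
  have hPval : P * (1 - e1) = c1 * e1 * (1 - e2) * T := by
    have hT' : T ≠ 0 := hT.ne'
    field_simp at heq1
    linarith [heq1]
  -- derive I2 ≤ e2 * T
  have hI2le : I2 ≤ e2 * T := by
    have h2 : c1 * (-e1^2 * T + e1^2 * I2 + J) ≤ (1 - e1) * (c1 * e1 * (1 - e2) * T) := by
      have h1 : c1 * ((1 - e1)^2 * Q) = (1 - e1) * (P * (1 - e1)) := by
        rw [hii]; ring
      have h2' : c1 * (-e1^2 * T + e1^2 * I2 + J) ≤ c1 * ((1 - e1)^2 * Q) :=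
        mul_le_mul_of_nonneg_left hmono hc1.le
      rw [h1, hPval] at h2'
      exact h2'
    have h3 : e2 * (c1 * (-e1^2 * T + e1^2 * I2 + J))
        ≤ e2 * ((1 - e1) * (c1 * e1 * (1 - e2) * T)) :=
      mul_le_mul_of_nonneg_left h2 he2a.le
    have hq1 : e2 * (c1 * J) = e2 * (c2 * I2) := by rw [hi]
    have hq2 : c2 * e2 * I2 = c1 * e1 * (1 - e2) * I2 := by rw [heq2]
    have h5 : (c1 * e1) * (e2 * e1 * I2 + (1 - e2) * I2 - e2 * e1 * T)
        ≤ (c1 * e1) * ((1 - e1) * (1 - e2) * e2 * T) := by nlinarith [h3, hq1, hq2]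
    have h6 : e2 * e1 * I2 + (1 - e2) * I2 - e2 * e1 * T
        ≤ (1 - e1) * (1 - e2) * e2 * T :=
      le_of_mul_le_mul_left h5 (mul_pos hc1 he1a)
    have hfac : (0:ℝ) < 1 - e2 + e1 * e2 := by nlinarith
    nlinarith [h6, hfac]
  constructor
  · have hsub : (∫ t in (0:ℝ)..T, (x2 t - e2)) = I2 - e2 * T := by
      rw [intervalIntegral.integral_sub (hx2c.intervalIntegrable 0 T)
        ((continuous_const).intervalIntegrable 0 T), intervalIntegral.integral_const]
      simp [smul_eq_mul]
      ring
    rw [hsub]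
    have h1T : (0:ℝ) < 1 / T := by positivity
    have : I2 - e2 * T ≤ 0 := by linarith
    exact mul_nonpos_of_nonneg_of_nonpos h1T.le this
  · have hc2I : (∫ t in (0:ℝ)..T, c2 * x2 t) = c2 * I2 := by
      rw [intervalIntegral.integral_const_mul]
    rw [hc2I]
    have hT' : T ≠ 0 := hT.ne'
    have h1 : 1/T * (c2 * I2) ≤ 1/T * (c2 * (e2 * T)) :=
      mul_le_mul_of_nonneg_left (mul_le_mul_of_nonneg_left hI2le hc2.le)
        (by positivity)
    have h2 : 1/T * (c2 * (e2 * T)) = c2 * e2 := by field_simp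
    linarith
end
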